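/- arXiv:2208.00366 — 5 statements merged into one kernel-verified Lean document; each statement's English description precedes it below -/
import Mathlib

section
/- Let v = colour(u, y, y′) where u is a Sturmian sequence over {a, b} and y, y′ are constant gap sequences over disjoint alphabets, and let w be a factor of u. Then for any i, j ∈ ℕ, the word obtained by colouring w with the shifted sequences σ^i(y) and σ^j(y′) is a factor of v. In particular, if a Sturmian sequence ũ has the same language as u, then E(colour(ũ, y, y′)) = E(v) and E*(colour(ũ, y, y′)) = E*(v). -/
open Filter Topology Matrix
open scoped ENNReal

namespace Paper

variable {A : Type*}

/-- The factor of `u` of length `len` starting at position `i`. -/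
def factorAt (u : ℕ → A) (i len : ℕ) : List A :=
  (List.range len).map fun k => u (i + k)

/-- The word `w` occurs in `u` at position `i`. -/
def OccursAt (u : ℕ → A) (w : List A) (i : ℕ) : Prop :=
  w = factorAt u i w.length

/-- `w` is a factor of the sequence `u`. -/
def IsFactor (u : ℕ → A) (w : List A) : Prop :=
  ∃ i, OccursAt u w i

/-- `u` is recurrent: every factor occurs infinitely often. -/
def Recurrent (u : ℕ → A) : Prop :=
  ∀ w, IsFactor u w → ∀ N, ∃ i, N ≤ i ∧ OccursAt u w i

/-- `u` is uniformly recurrent: every factor occurs in every window of some fixed length. -/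
def UniformlyRecurrent (u : ℕ → A) : Prop :=
  ∀ w, IsFactor u w → ∃ R, ∀ i, ∃ j, i ≤ j ∧ j < i + R ∧ OccursAt u w j

/-- `u` is eventually periodic. -/
def EventuallyPeriodic (u : ℕ → A) : Prop :=
  ∃ p, 0 < p ∧ ∃ N, ∀ n, N ≤ n → u (n + p) = u n

/-- `u` is balanced: counts of each letter in equal-length factors differ by at most 1. -/
def IsBalanced [DecidableEq A] (u : ℕ → A) : Prop :=
  ∀ (c : A) (w w' : List A), IsFactor u w → IsFactor u w' → w.length = w'.length →
    (w.count c : ℤ) - (w'.count c : ℤ) ≤ 1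

/-- `w^{n/|w|}`, i.e. the prefix of length `n` of `w^ω`, is a factor of `u`
(for a nonempty word `w`). -/
def HasPowerFactor (u : ℕ → A) (w : List A) (n : ℕ) : Prop :=
  w ≠ [] ∧ ∃ i, ∀ k, k < n → u (i + k) = w.getD (k % w.length) (u i)

/-- The critical exponent `E(u)`. -/
noncomputable def critExp (u : ℕ → A) : ℝ≥0∞ :=
  sSup {e | ∃ w n, HasPowerFactor u w n ∧ e = (n : ℝ≥0∞) / (w.length : ℝ≥0∞)}

/-- The maximal exponent of a repetition whose root has length `l`. -/
noncomputable def maxExpLen (u : ℕ → A) (l : ℕ) : ℝ≥0∞ :=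
  sSup {e | ∃ w n, (w : List A).length = l ∧ HasPowerFactor u w n ∧
    e = (n : ℝ≥0∞) / (l : ℝ≥0∞)}

/-- The asymptotic critical exponent `E*(u)`. -/
noncomputable def acritExp (u : ℕ → A) : ℝ≥0∞ :=
  if critExp u = ⊤ then ⊤ else Filter.limsup (fun l => maxExpLen u l) Filter.atTop

/-- `w` is a right special factor of `u`. -/
def RightSpecial (u : ℕ → A) (w : List A) : Prop :=
  ∃ c c' : A, c ≠ c' ∧ IsFactor u (w ++ [c]) ∧ IsFactor u (w ++ [c'])

/-- `w` is a left special factor of `u`. -/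
def LeftSpecial (u : ℕ → A) (w : List A) : Prop :=
  ∃ c c' : A, c ≠ c' ∧ IsFactor u (c :: w) ∧ IsFactor u (c' :: w)

/-- `w` is a bispecial factor of `u`. -/
def Bispecial (u : ℕ → A) (w : List A) : Prop := LeftSpecial u w ∧ RightSpecial u w

/-- `r` is a return word to `w` in `u`: the word between two consecutive occurrences of `w`. -/
def IsReturnWord (u : ℕ → A) (w r : List A) : Prop :=
  ∃ i j, i < j ∧ OccursAt u w i ∧ OccursAt u w j ∧
    (∀ t, i < t → t < j → ¬ OccursAt u w t) ∧ r = factorAt u i (j - i)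

/-- A Sturmian sequence: an aperiodic balanced sequence over the binary
alphabet `Bool` (`false` = letter a, `true` = letter b). -/
def IsSturmian (u : ℕ → Bool) : Prop :=
  ¬ EventuallyPeriodic u ∧ IsBalanced u

/-- Prepend a letter to a sequence. -/
def prepend (c : A) (u : ℕ → A) : ℕ → A
  | 0 => c
  | n + 1 => u n

/-- A standard Sturmian sequence: `u`, `a·u` and `b·u` are all Sturmian. -/
def IsStandard (u : ℕ → Bool) : Prop :=
  IsSturmian u ∧ IsSturmian (prepend false u) ∧ IsSturmian (prepend true u)

/-- The letter `c` has frequency `ρ` in `u`. -/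
def HasFreq [DecidableEq A] (u : ℕ → A) (c : A) (ρ : ℝ) : Prop :=
  Tendsto (fun n => ((factorAt u 0 n).count c : ℝ) / n) atTop (𝓝 ρ)

/-- `u` has slope `θ = ρ_a(u)/ρ_b(u)`, with `b = true` the most frequent letter. -/
def HasSlope (u : ℕ → Bool) (θ : ℝ) : Prop :=
  ∃ ρa ρb : ℝ, HasFreq u false ρa ∧ HasFreq u true ρb ∧ ρa < ρb ∧ θ = ρa / ρb

/-- `cfP a N` is the numerator `p_{N-1}` of the convergents of the continued
fraction `[0; a 1, a 2, …]` (index shifted by one: `cfP a 0 = p_{-1} = 1`). -/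
def cfP (a : ℕ → ℕ) : ℕ → ℕ
  | 0 => 1
  | 1 => 0
  | n + 2 => a (n + 1) * cfP a (n + 1) + cfP a n

/-- `cfQ a N` is the denominator `q_{N-1}` of the convergents of the continued
fraction `[0; a 1, a 2, …]` (index shifted by one: `cfQ a 0 = q_{-1} = 0`). -/
def cfQ (a : ℕ → ℕ) : ℕ → ℕ
  | 0 => 0
  | 1 => 1
  | n + 2 => a (n + 1) * cfQ a (n + 1) + cfQ a n

/-- The value of the continued fraction `[0; a 1, a 2, …]`, as the limit of its
convergents `p_N / q_N`. -/
noncomputable def cfValue (a : ℕ → ℕ) : ℝ :=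
  limUnder atTop fun N => (cfP a (N + 1) : ℝ) / (cfQ a (N + 1) : ℝ)

/-- `δ_N = [a_{N+1}; a_{N+2}, …]`, the inverse of the value of the shifted
continued fraction `[0; a_{N+1}, a_{N+2}, …]`. -/
noncomputable def cfDelta (a : ℕ → ℕ) (N : ℕ) : ℝ :=
  (cfValue fun n => a (n + N))⁻¹

/-- `Q_{N-1} = p_{N-1} + q_{N-1}` (shifted index as in `cfP`, `cfQ`). -/
def cfQpair (a : ℕ → ℕ) (N : ℕ) : ℕ := cfP a N + cfQ a N

/-- The matrix `A_N` with rows `(p_{N-1}, p_N)` and `(q_{N-1}, q_N)`. -/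
def cfMat (a : ℕ → ℕ) (N : ℕ) : Matrix (Fin 2) (Fin 2) ℤ :=
  !![(cfP a N : ℤ), (cfP a (N + 1) : ℤ); (cfQ a N : ℤ), (cfQ a (N + 1) : ℤ)]

/-- The colouring of a binary sequence `u` by `y` (on the letter `a = false`) and
`y'` (on the letter `b = true`). -/
def colour (u : ℕ → Bool) (y y' : ℕ → A) (n : ℕ) : A :=
  if u n then y' ((List.range n).countP fun k => u k)
  else y ((List.range n).countP fun k => !u k)

/-- Colouring of a finite binary word by the sequences `y` and `y'`. -/
def colourWord : (ℕ → A) → (ℕ → A) → List Bool → List A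
  | _, _, [] => []
  | y, y', c :: w =>
      if c then y' 0 :: colourWord y (fun n => y' (n + 1)) w
      else y 0 :: colourWord (fun n => y (n + 1)) y' w

/-- A constant gap sequence: every occurring letter occurs with a constant gap. -/
def IsConstantGap (y : ℕ → A) : Prop :=
  ∀ c : A, (∃ n, y n = c) →
    ∃ g, 0 < g ∧ ∀ n, y n = c →
      y (n + g) = c ∧ ∀ t, 0 < t → t < g → y (n + t) ≠ c

/-- The minimal period of a sequence. -/
noncomputable def minPeriod (y : ℕ → A) : ℕ :=
  sInf {p | 0 < p ∧ ∀ n, y (n + p) = y n}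

/-- `d` is a derived sequence of `u` to the factor `z`: coding (by a binary
alphabet, via an injective labelling `f` of return words) of the decomposition
of `u` into return words to `z`. -/
def IsDerivedSeq (u : ℕ → Bool) (z : List Bool) (d : ℕ → Bool) : Prop :=
  ∃ (occ : ℕ → ℕ) (f : Bool → List Bool),
    StrictMono occ ∧ (∀ n, OccursAt u z (occ n)) ∧
    (∀ i, OccursAt u z i → ∃ n, occ n = i) ∧
    f true ≠ f false ∧
    ∀ n, factorAt u (occ n) (occ (n + 1) - occ n) = f (d n)

/-- The equivalence of unimodular matrices: `M ≡ M'` iff `diag(c,c')·M ≡ M'`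
with the first row mod `Y` and the second row mod `Y'`, for some `c` coprime
with `Y` and `c'` coprime with `Y'`. -/
def MatEquiv (Y Y' : ℕ) (M M' : Matrix (Fin 2) (Fin 2) ℤ) : Prop :=
  ∃ c c' : ℤ, IsCoprime c (Y : ℤ) ∧ IsCoprime c' (Y' : ℤ) ∧
    (∀ j, (Y : ℤ) ∣ (c * M 0 j - M' 0 j)) ∧
    (∀ j, (Y' : ℤ) ∣ (c' * M 1 j - M' 1 j))

/-- `δ > 1` is `(1+β)`-forcing for (the class of) the matrix `M`, with respect to
the periods `P`, `P'`. -/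
def IsForcing (β : ℝ) (P P' : ℕ) (M : Matrix (Fin 2) (Fin 2) ℤ) (δ : ℝ) : Prop :=
  1 < δ ∧ ∃ m k l : ℕ, 0 < k + l ∧
    -- (P1)
    ((P : ℤ) ∣ (M 0 0 * (l : ℤ) + M 0 1 * ((m : ℤ) * l + k)) ∧
     (P' : ℤ) ∣ (M 1 0 * (l : ℤ) + M 1 1 * ((m : ℤ) * l + k))) ∧
    -- (P2)
    ((m : ℝ) + 1 < δ ∧ |(l : ℝ) * (δ - m) - k| < δ - m + 1) ∧
    -- (P3)
    ((k = l → β < 1 / (k : ℝ)) ∧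
     (l < k → β ≤ (1 + (m : ℝ)) / ((k : ℝ) + m * l)) ∧
     (k < l → β ≤ (2 + (m : ℝ)) / ((k : ℝ) + (m + 1) * l)))

/-- The set `F(β, M)` of `(1+β)`-forcing `δ`'s. -/
def ForcingSet (β : ℝ) (P P' : ℕ) (M : Matrix (Fin 2) (Fin 2) ℤ) : Set ℝ :=
  {δ | IsForcing β P P' M δ}

/-- The set `D(β, M) = {δ > 1 : δ is not in the closure of F(β, M)}`. -/
def DSet (β : ℝ) (P P' : ℕ) (M : Matrix (Fin 2) (Fin 2) ℤ) : Set ℝ :=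
  {δ | 1 < δ ∧ δ ∉ closure (ForcingSet β P P' M)}

/-- The finite Fibonacci words: fixed-point prefixes of `b ↦ ba`, `a ↦ b`,
where `b = true`, `a = false`. -/
def fibList : ℕ → List Bool
  | 0 => [true]
  | 1 => [true, false]
  | n + 2 => fibList (n + 1) ++ fibList n

/-- The Fibonacci sequence, the fixed point of `b ↦ ba`, `a ↦ b`. -/
def fibWord (n : ℕ) : Bool := (fibList (n + 2)).getD n true

end Paper

namespace Paper


section Aux

variable {A : Type*}

-- basic lemmas

@[simp] lemma length_factorAt (u : ℕ → A) (i n : ℕ) : (factorAt u i n).length = n := by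
  simp [factorAt]

lemma getElem_factorAt (u : ℕ → A) (i n k : ℕ) (hk : k < n) :
    (factorAt u i n)[k]'(by simpa using hk) = u (i + k) := by
  simp [factorAt]

lemma occursAt_factorAt (u : ℕ → A) (i n : ℕ) : OccursAt u (factorAt u i n) i := by
  simp [OccursAt]

lemma isFactor_factorAt (u : ℕ → A) (i n : ℕ) : IsFactor u (factorAt u i n) :=
  ⟨i, occursAt_factorAt u i n⟩

lemma OccursAt.apply {u : ℕ → A} {w : List A} {i : ℕ} (h : OccursAt u w i)
    {k : ℕ} (hk : k < w.length) : w[k] = u (i + k) := by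
  rw [List.getElem_of_eq h hk]
  exact getElem_factorAt u i w.length k (by simpa using hk)

lemma occursAt_of_agree {u : ℕ → A} {w : List A} {i t : ℕ} (h : OccursAt u w i)
    (hag : ∀ n < w.length, u (t + n) = u (i + n)) : OccursAt u w t := by
  rw [OccursAt]
  apply List.ext_getElem (by simp)
  intro n h1 h2
  rw [getElem_factorAt u t w.length n h1, hag n h1, ← h.apply h1]

lemma factorAt_add (u : ℕ → A) (i m n : ℕ) :
    factorAt u i (m + n) = factorAt u i m ++ factorAt u (i + m) n := by
  simp only [factorAt, List.range_add, List.map_append, List.map_map]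
  congr 1
  apply List.map_congr_left
  intro k _
  simp [Function.comp]
  ring_nf

lemma factorAt_succ (u : ℕ → A) (i n : ℕ) :
    factorAt u i (n + 1) = u i :: factorAt u (i + 1) n := by
  simp only [factorAt, List.range_succ_eq_map, List.map_cons, List.map_map]
  congr 1
  apply List.map_congr_left
  intro k _
  simp [Function.comp, Nat.succ_eq_add_one]
  ring_nf

lemma occursAt_cons {u : ℕ → A} {c : A} {w : List A} {t : ℕ}
    (h : OccursAt u (c :: w) t) : c = u t ∧ OccursAt u w (t + 1) := by
  rw [OccursAt, List.length_cons, factorAt_succ] at h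
  obtain ⟨h1, h2⟩ := List.cons_eq_cons.mp h
  exact ⟨h1, h2⟩

-- counting

def cnt (u : ℕ → Bool) (m n : ℕ) : ℕ := (factorAt u m n).count true

lemma cnt_add (u : ℕ → Bool) (m a b : ℕ) :
    cnt u m (a + b) = cnt u m a + cnt u (m + a) b := by
  simp [cnt, factorAt_add, List.count_append]

@[simp] lemma cnt_zero (u : ℕ → Bool) (m : ℕ) : cnt u m 0 = 0 := by
  simp [cnt, factorAt]

lemma cnt_one (u : ℕ → Bool) (m : ℕ) : cnt u m 1 = if u m then 1 else 0 := by
  have : factorAt u m 1 = [u m] := by simp [factorAt, List.range_succ]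
  rw [cnt, this]
  cases h : u m <;> simp [List.count_cons]

lemma cnt_le (u : ℕ → Bool) (m n : ℕ) : cnt u m n ≤ n := by
  have := List.count_le_length (l := factorAt u m n) (a := true)
  simpa [cnt] using this

lemma cnt_succ (u : ℕ → Bool) (m n : ℕ) :
    cnt u m (n + 1) = cnt u m n + (if u (m + n) then 1 else 0) := by
  rw [cnt_add, cnt_one]

-- the exchange identity
lemma cnt_exchange (u : ℕ → Bool) (n q : ℕ) :
    cnt u n 1 + cnt u (n + 1) q = cnt u n q + cnt u (n + q) 1 := by
  have h1 : cnt u n (1 + q) = cnt u n 1 + cnt u (n + 1) q := cnt_add u n 1 q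
  have h2 : cnt u n (q + 1) = cnt u n q + cnt u (n + q) 1 := cnt_add u n q 1
  rw [← h1, ← h2, Nat.add_comm 1 q]


variable {u : ℕ → Bool}

noncomputable def kmin (u : ℕ → Bool) (n : ℕ) : ℕ := sInf (Set.range fun m => cnt u m n)

lemma kmin_le (u : ℕ → Bool) (n m : ℕ) : kmin u n ≤ cnt u m n :=
  Nat.sInf_le ⟨m, rfl⟩

lemma exists_kmin (u : ℕ → Bool) (n : ℕ) : ∃ m, cnt u m n = kmin u n := by
  have : kmin u n ∈ Set.range fun m => cnt u m n := Nat.sInf_mem ⟨cnt u 0 n, 0, rfl⟩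
  exact this

lemma cnt_le_kmin (hb : IsBalanced u) (n m : ℕ) : cnt u m n ≤ kmin u n + 1 := by
  obtain ⟨m₀, hm₀⟩ := exists_kmin u n
  have h := hb true (factorAt u m n) (factorAt u m₀ n)
    (isFactor_factorAt u m n) (isFactor_factorAt u m₀ n) (by simp)
  have : (cnt u m n : ℤ) - (cnt u m₀ n : ℤ) ≤ 1 := h
  omega

@[simp] lemma kmin_zero (u : ℕ → Bool) : kmin u 0 = 0 := by
  have := kmin_le u 0 0
  simpa using this

lemma kmin_superadd (u : ℕ → Bool) (a b : ℕ) : kmin u a + kmin u b ≤ kmin u (a + b) := by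
  obtain ⟨m₀, hm₀⟩ := exists_kmin u (a + b)
  rw [← hm₀, cnt_add]
  exact Nat.add_le_add (kmin_le u a m₀) (kmin_le u b (m₀ + a))

lemma kmin_subadd (hb : IsBalanced u) (a b : ℕ) :
    kmin u (a + b) ≤ kmin u a + kmin u b + 1 := by
  obtain ⟨m₀, hm₀⟩ := exists_kmin u a
  calc kmin u (a + b) ≤ cnt u m₀ (a + b) := kmin_le u (a + b) m₀
    _ = cnt u m₀ a + cnt u (m₀ + a) b := cnt_add u m₀ a b
    _ ≤ kmin u a + (kmin u b + 1) := by
        rw [hm₀]; exact Nat.add_le_add_left (cnt_le_kmin hb b (m₀ + a)) _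
    _ = kmin u a + kmin u b + 1 := by ring

lemma kmin_mul_ge (u : ℕ → Bool) (t b : ℕ) : t * kmin u b ≤ kmin u (t * b) := by
  induction t with
  | zero => simp
  | succ t ih =>
      have := kmin_superadd u (t * b) b
      calc (t+1) * kmin u b = t * kmin u b + kmin u b := by ring
        _ ≤ kmin u (t * b) + kmin u b := by omega
        _ ≤ kmin u (t * b + b) := this
        _ = kmin u ((t+1) * b) := by ring_nf

lemma kmin_mul_le (hb : IsBalanced u) (t a : ℕ) : kmin u (t * a) ≤ t * kmin u a + t := by
  induction t with
  | zero => simp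
  | succ t ih =>
      have h := kmin_subadd hb (t * a) a
      have : (t+1) * a = t * a + a := by ring
      rw [this]
      calc kmin u (t * a + a) ≤ kmin u (t * a) + kmin u a + 1 := h
        _ ≤ (t * kmin u a + t) + kmin u a + 1 := by omega
        _ = (t+1) * kmin u a + (t+1) := by ring

lemma kmin_NK (hb : IsBalanced u) (a b : ℕ) : a * kmin u b ≤ b * kmin u a + b := by
  calc a * kmin u b ≤ kmin u (a * b) := kmin_mul_ge u a b
    _ = kmin u (b * a) := by rw [Nat.mul_comm]
    _ ≤ b * kmin u a + b := kmin_mul_le hb b a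

noncomputable def alph (u : ℕ → Bool) : ℝ :=
  sSup (Set.range fun n : ℕ => (kmin u (n+1) : ℝ) / (n+1))

lemma alph_bdd (u : ℕ → Bool) :
    BddAbove (Set.range fun n : ℕ => (kmin u (n+1) : ℝ) / (n+1)) := by
  refine ⟨1, ?_⟩
  rintro x ⟨n, rfl⟩
  have h1 : kmin u (n+1) ≤ n + 1 := (kmin_le u (n+1) 0).trans (cnt_le u 0 (n+1))
  rw [div_le_one (by positivity)]
  exact_mod_cast h1

lemma alph_A1 (u : ℕ → Bool) (n : ℕ) : (kmin u (n+1) : ℝ) ≤ (n+1) * alph u := by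
  have h : (kmin u (n+1) : ℝ) / (n+1) ≤ alph u := le_csSup (alph_bdd u) ⟨n, rfl⟩
  have hpos : (0:ℝ) < n + 1 := by positivity
  calc (kmin u (n+1) : ℝ) = (n+1) * ((kmin u (n+1) : ℝ) / (n+1)) := by field_simp
    _ ≤ (n+1) * alph u := by nlinarith

lemma alph_A2 (hb : IsBalanced u) (n : ℕ) :
    ((n:ℝ)+1) * alph u ≤ kmin u (n+1) + 1 := by
  have h : alph u ≤ ((kmin u (n+1) : ℝ) + 1) / (n+1) := by
    refine csSup_le ⟨_, ⟨0, rfl⟩⟩ ?_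
    rintro x ⟨m, rfl⟩
    rw [div_le_div_iff₀ (by positivity) (by positivity)]
    have h0 := kmin_NK hb (n+1) (m+1)
    have h1 : ((n:ℝ)+1) * (kmin u (m+1) : ℝ) ≤ ((m:ℝ)+1) * (kmin u (n+1) : ℝ) + ((m:ℝ)+1) := by
      exact_mod_cast h0
    nlinarith
  have hpos : (0:ℝ) < n + 1 := by positivity
  calc ((n:ℝ)+1) * alph u ≤ (n+1) * (((kmin u (n+1) : ℝ) + 1) / (n+1)) := by nlinarith
    _ = (kmin u (n+1) : ℝ) + 1 := by field_simp

lemma alph_nonneg (u : ℕ → Bool) : 0 ≤ alph u := by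
  have : (kmin u 1 : ℝ) / 1 ≤ alph u := le_csSup (alph_bdd u) ⟨0, by norm_num⟩
  have h0 : (0:ℝ) ≤ (kmin u 1 : ℝ) / 1 := by positivity
  linarith

noncomputable def hfun (u : ℕ → Bool) (m : ℕ) : ℝ := (cnt u 0 m : ℝ) - m * alph u

lemma hfun_add (u : ℕ → Bool) (m n : ℕ) :
    hfun u (m + n) - hfun u m = (cnt u m n : ℝ) - n * alph u := by
  have : cnt u 0 (m + n) = cnt u 0 m + cnt u m n := by
    have := cnt_add u 0 m n
    simpa using this
  simp only [hfun, this]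
  push_cast
  ring

lemma cnt_lb (hb : IsBalanced u) (m n : ℕ) : (n:ℝ) * alph u - 1 ≤ cnt u m n := by
  rcases n with _ | d
  · simp
  · have h1 : ((d:ℝ)+1) * alph u ≤ kmin u (d+1) + 1 := alph_A2 hb d
    have h2 : kmin u (d+1) ≤ cnt u m (d+1) := kmin_le u (d+1) m
    have h2' : (kmin u (d+1) : ℝ) ≤ cnt u m (d+1) := by exact_mod_cast h2
    push_cast
    linarith

lemma cnt_ub (hb : IsBalanced u) (m n : ℕ) : (cnt u m n : ℝ) ≤ n * alph u + 1 := by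
  rcases n with _ | d
  · simp
  · have h1 : (kmin u (d+1) : ℝ) ≤ ((d:ℝ)+1) * alph u := by
      have := alph_A1 u d; push_cast at this ⊢; linarith
    have h2 : cnt u m (d+1) ≤ kmin u (d+1) + 1 := cnt_le_kmin hb (d+1) m
    have h2' : (cnt u m (d+1) : ℝ) ≤ (kmin u (d+1) : ℝ) + 1 := by exact_mod_cast h2
    push_cast
    linarith

lemma habs0 (hb : IsBalanced u) (m n : ℕ) : |hfun u (m + n) - hfun u m| ≤ 1 := by
  rw [hfun_add, abs_le]
  constructor
  · have := cnt_lb hb m n; linarith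
  · have := cnt_ub hb m n; linarith

theorem alph_irrational (hper : ¬ EventuallyPeriodic u) (hb : IsBalanced u) :
    Irrational (alph u) := by
  rw [Irrational]
  intro hmem
  obtain ⟨r, hr⟩ := hmem
  set q := r.den with hqdef
  have hq : 0 < q := r.pos
  have hr0 : (0:ℚ) ≤ r := by
    have : (0:ℝ) ≤ (r:ℝ) := by rw [hr]; exact alph_nonneg u
    exact_mod_cast this
  set p := r.num.toNat with hpdef
  have hnum : (r.num : ℝ) = (p : ℝ) := by
    have : (0:ℤ) ≤ r.num := Rat.num_nonneg.mpr hr0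
    rw [hpdef]; exact_mod_cast (Int.toNat_of_nonneg this).symm
  have hqα : (q : ℝ) * alph u = p := by
    rw [← hr, Rat.cast_def]
    rw [← hnum]
    field_simp
    rw [hqdef]; ring
  -- p vs kmin q
  obtain ⟨d, hd⟩ : ∃ d, q = d + 1 := ⟨q - 1, by omega⟩
  have hA1 : (kmin u q : ℝ) ≤ p := by
    have := alph_A1 u d
    calc (kmin u q : ℝ) ≤ (d+1) * alph u := by rw [hd]; push_cast; exact_mod_cast alph_A1 u d
      _ = (q:ℝ) * alph u := by rw [hd]; push_cast; ring
      _ = p := hqα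
  have hA2 : (p : ℝ) ≤ kmin u q + 1 := by
    have := alph_A2 hb d
    calc (p:ℝ) = (q:ℝ) * alph u := hqα.symm
      _ = ((d:ℝ)+1) * alph u := by rw [hd]; push_cast; ring
      _ ≤ kmin u (d+1) + 1 := this
      _ = kmin u q + 1 := by rw [← hd]
  have hk1 : kmin u q ≤ p := by exact_mod_cast hA1
  have hk2 : p ≤ kmin u q + 1 := by exact_mod_cast hA2
  -- deviations exist beyond every N
  have hdev : ∀ N, ∃ n, N ≤ n ∧ cnt u n q ≠ cnt u (n+1) q := by
    intro N
    rw [EventuallyPeriodic] at hper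
    push_neg at hper
    obtain ⟨n, hn, hne⟩ := hper q hq N
    refine ⟨n, hn, ?_⟩
    intro heq
    have hex := cnt_exchange u n q
    rw [heq] at hex
    have : cnt u n 1 = cnt u (n + q) 1 := by omega
    rw [cnt_one, cnt_one] at this
    apply hne
    cases h1 : u n <;> cases h2 : u (n + q) <;> simp [h1, h2] at this ⊢
  have hrange : ∀ n, cnt u n q = kmin u q ∨ cnt u n q = kmin u q + 1 := by
    intro n
    have := kmin_le u q n
    have := cnt_le_kmin hb q n
    omega
  -- in both cases, get deviations of a fixed sign infinitely often, then contradiction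
  have hstep : ∀ n, hfun u (n + q) - hfun u n = (cnt u n q : ℝ) - p := by
    intro n
    rw [hfun_add, hqα]
  have key : ∀ (ε : ℝ), (ε = 1 ∨ ε = -1) →
      (∀ n, 0 ≤ ε * ((cnt u n q : ℝ) - p)) →
      (∀ N, ∃ n, N ≤ n ∧ ε * ((cnt u n q : ℝ) - p) = 1) → False := by
    intro ε hε hlow hv
    choose f hf1 hf2 using hv
    set g : ℕ → ℕ := fun k => Nat.rec (f 0) (fun _ prev => f (prev + 1)) k with hg
    have hgdev : ∀ k, ε * ((cnt u (g k) q : ℝ) - p) = 1 := by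
      intro k
      cases k with
      | zero => exact hf2 0
      | succ k => exact hf2 _
    have hglt : ∀ k, g k < g (k + 1) := by
      intro k
      have := hf1 (g k + 1)
      simpa [hg] using this
    have hgmono : StrictMono g := strictMono_nat_of_lt_succ hglt
    obtain ⟨x, hx, y, hy, hxy, hmod⟩ :=
      Finset.exists_ne_map_eq_of_card_lt_of_maps_to (s := Finset.range (q+1))
        (t := Finset.range q) (by simp)
        (fun a _ => Finset.mem_range.mpr (Nat.mod_lt _ hq)) (f := fun a => g a % q)
    obtain ⟨k, k', hkk', hmodeq⟩ : ∃ k k', g k < g k' ∧ g k % q = g k' % q := by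
      rcases lt_or_gt_of_ne hxy with h | h
      · exact ⟨x, y, hgmono h, hmod⟩
      · exact ⟨y, x, hgmono h, hmod.symm⟩
    have hdvd : q ∣ g k' - g k := (Nat.modEq_iff_dvd' hkk'.le).mp hmodeq
    obtain ⟨s, hs⟩ := hdvd
    obtain ⟨s', rfl⟩ : ∃ s', s = s' + 1 := by
      refine ⟨s - 1, ?_⟩
      have : q * s ≠ 0 := by omega
      have hs0 : s ≠ 0 := by intro h; rw [h] at this; omega
      omega
    have hgk' : g k' = (g k + q) + s' * q := by
      have h1 : g k' = q * (s' + 1) + g k := by omega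
      rw [h1]; ring
    have mono : ∀ n t, 0 ≤ ε * (hfun u (n + t * q) - hfun u n) := by
      intro n t
      induction t with
      | zero => simp
      | succ t ih =>
          have harr : n + (t + 1) * q = (n + t * q) + q := by ring
          have h1 := hstep (n + t * q)
          have h2 := hlow (n + t * q)
          have : ε * (hfun u ((n + t * q) + q) - hfun u n)
              = ε * (hfun u (n + t * q) - hfun u n) + ε * ((cnt u (n + t*q) q : ℝ) - p) := by
            rw [h1.symm] at h2 ⊢
            ring
          rw [harr, this]
          linarith
    have hdev1 : ε * (hfun u (g k + q) - hfun u (g k)) = 1 := by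
      rw [hstep]; exact hgdev k
    have hdev2 : ε * (hfun u (g k' + q) - hfun u (g k')) = 1 := by
      rw [hstep]; exact hgdev k'
    have hmid : 0 ≤ ε * (hfun u (g k') - hfun u (g k + q)) := by
      have := mono (g k + q) s'
      rwa [← hgk'] at this
    have htot : 2 ≤ ε * (hfun u (g k' + q) - hfun u (g k)) := by
      have : ε * (hfun u (g k' + q) - hfun u (g k))
          = ε * (hfun u (g k' + q) - hfun u (g k')) + ε * (hfun u (g k') - hfun u (g k + q))
            + ε * (hfun u (g k + q) - hfun u (g k)) := by ring
      rw [this, hdev1, hdev2]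
      linarith
    have harr2 : g k' + q = g k + (q * (s' + 1) + q) := by omega
    have hbound := habs0 hb (g k) (q * (s' + 1) + q)
    rw [← harr2] at hbound
    rcases hε with h | h <;> rw [h] at htot <;> rw [abs_le] at hbound <;> linarith
  rcases (by omega : p = kmin u q ∨ p = kmin u q + 1) with hp | hp
  · refine key 1 (Or.inl rfl) ?_ ?_
    · intro n
      have := kmin_le u q n
      have h' : (p : ℝ) ≤ cnt u n q := by
        rw [hp]; exact_mod_cast this
      linarith
    · intro N
      obtain ⟨n, hn, hne⟩ := hdev N
      have h1 := hrange n
      have h2 := hrange (n + 1)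
      rcases h1 with h1 | h1
      · refine ⟨n + 1, by omega, ?_⟩
        have : cnt u (n+1) q = kmin u q + 1 := by omega
        rw [this, hp]; push_cast; ring
      · refine ⟨n, hn, ?_⟩
        rw [h1, hp]; push_cast; ring
  · refine key (-1) (Or.inr rfl) ?_ ?_
    · intro n
      have := cnt_le_kmin hb q n
      have h' : (cnt u n q : ℝ) ≤ p := by
        rw [hp]; exact_mod_cast this
      linarith
    · intro N
      obtain ⟨n, hn, hne⟩ := hdev N
      have h1 := hrange n
      have h2 := hrange (n + 1)
      rcases h1 with h1 | h1
      · refine ⟨n, hn, ?_⟩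
        rw [h1, hp]; push_cast; ring
      · refine ⟨n + 1, by omega, ?_⟩
        have : cnt u (n+1) q = kmin u q := by omega
        rw [this, hp]; push_cast; ring


variable {u : ℕ → Bool}

lemma nalpha_ne_int (hirr : Irrational (alph u)) (n : ℕ) (hn : 0 < n) (z : ℤ) :
    (n : ℝ) * alph u ≠ (z : ℝ) := by
  intro h
  apply hirr
  refine ⟨(z : ℚ) / (n : ℚ), ?_⟩
  have hn' : (n : ℝ) ≠ 0 := by positivity
  push_cast
  field_simp
  linarith [h]

lemma cnt_lb_strict (hb : IsBalanced u) (hirr : Irrational (alph u)) (m n : ℕ) :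
    (n : ℝ) * alph u - 1 < cnt u m n := by
  rcases Nat.eq_zero_or_pos n with rfl | hn
  · simp
  · have h1 : (n:ℝ) * alph u ≤ kmin u n + 1 := by
      obtain ⟨d, rfl⟩ : ∃ d, n = d + 1 := ⟨n - 1, by omega⟩
      have := alph_A2 hb d
      push_cast at this ⊢
      linarith
    have h2 : (n:ℝ) * alph u ≠ kmin u n + 1 := by
      have := nalpha_ne_int hirr n hn ((kmin u n : ℤ) + 1)
      push_cast at this
      exact this
    have h3 : (kmin u n : ℝ) ≤ cnt u m n := by exact_mod_cast kmin_le u n m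
    cases h1.lt_or_eq with
    | inl h => linarith
    | inr h => exact absurd h h2

lemma cnt_ub_strict (hb : IsBalanced u) (hirr : Irrational (alph u)) (m n : ℕ) :
    (cnt u m n : ℝ) < n * alph u + 1 := by
  rcases Nat.eq_zero_or_pos n with rfl | hn
  · simpa using (by norm_num : (0:ℝ) < 0 * alph u + 1)
  · have h1 : (kmin u n : ℝ) ≤ (n:ℝ) * alph u := by
      obtain ⟨d, rfl⟩ : ∃ d, n = d + 1 := ⟨n - 1, by omega⟩
      have := alph_A1 u d
      push_cast at this ⊢
      linarith
    have h2 : (kmin u n : ℝ) ≠ (n:ℝ) * alph u := by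
      have := nalpha_ne_int hirr n hn (kmin u n : ℤ)
      push_cast at this
      exact fun hh => this hh.symm
    have h3 : (cnt u m n : ℝ) ≤ (kmin u n : ℝ) + 1 := by
      exact_mod_cast cnt_le_kmin hb n m
    cases h1.lt_or_eq with
    | inl h => linarith
    | inr h => exact absurd h h2

lemma habs_strict (hb : IsBalanced u) (hirr : Irrational (alph u)) (m n : ℕ) :
    |hfun u (m + n) - hfun u m| < 1 := by
  rw [hfun_add, abs_lt]
  constructor
  · have := cnt_lb_strict hb hirr m n; linarith
  · have := cnt_ub_strict hb hirr m n; linarith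

lemma habs_all (hb : IsBalanced u) (hirr : Irrational (alph u)) (a b : ℕ) :
    |hfun u a - hfun u b| < 1 := by
  rcases le_total b a with h | h
  · obtain ⟨n, rfl⟩ := Nat.exists_eq_add_of_le h
    exact habs_strict hb hirr b n
  · obtain ⟨n, rfl⟩ := Nat.exists_eq_add_of_le h
    rw [abs_sub_comm]
    exact habs_strict hb hirr a n

@[simp] lemma hfun_zero (u : ℕ → Bool) : hfun u 0 = 0 := by simp [hfun]

noncomputable def rho (u : ℕ → Bool) : ℝ := sInf (Set.range (hfun u))

lemma rho_bdd (hb : IsBalanced u) (hirr : Irrational (alph u)) :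
    BddBelow (Set.range (hfun u)) := by
  refine ⟨-1, ?_⟩
  rintro x ⟨m, rfl⟩
  have := habs_all hb hirr m 0
  rw [hfun_zero, abs_lt] at this
  linarith [this.1]

noncomputable def phi (u : ℕ → Bool) (m : ℕ) : ℝ := hfun u m - rho u

lemma phi_nonneg (hb : IsBalanced u) (hirr : Irrational (alph u)) (m : ℕ) :
    0 ≤ phi u m := by
  have : rho u ≤ hfun u m := csInf_le (rho_bdd hb hirr) ⟨m, rfl⟩
  simp [phi]; linarith

lemma phi_le_one (hb : IsBalanced u) (hirr : Irrational (alph u)) (m : ℕ) :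
    phi u m ≤ 1 := by
  have hl : hfun u m - 1 ≤ rho u := by
    refine le_csInf ⟨_, ⟨0, rfl⟩⟩ ?_
    rintro x ⟨m', rfl⟩
    have := habs_all hb hirr m m'
    rw [abs_lt] at this
    linarith [this.2]
  simp [phi]; linarith

lemma phi_add (u : ℕ → Bool) (m n : ℕ) :
    phi u (m + n) = phi u m - n * alph u + cnt u m n := by
  have := hfun_add u m n
  simp only [phi]
  linarith

lemma phi_inj (hirr : Irrational (alph u)) {m m' : ℕ} (h : phi u m = phi u m') :
    m = m' := by
  by_contra hne
  rcases Nat.lt_or_ge m m' with hlt | hge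
  · obtain ⟨n, rfl⟩ := Nat.exists_eq_add_of_lt hlt
    have := phi_add u m (n + 1)
    rw [show m + (n+1) = m + n + 1 by ring, ← h] at this
    have h2 : ((n:ℝ) + 1) * alph u = (cnt u m (n+1) : ℝ) := by push_cast at this ⊢; linarith
    exact nalpha_ne_int hirr (n+1) (by omega) (cnt u m (n+1) : ℤ) (by push_cast; push_cast at h2; linarith)
  · rcases Nat.lt_or_ge m' m with hlt | hge'
    · obtain ⟨n, rfl⟩ := Nat.exists_eq_add_of_lt hlt
      have := phi_add u m' (n + 1)
      rw [show m' + (n+1) = m' + n + 1 by ring, h] at this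
      have h2 : ((n:ℝ) + 1) * alph u = (cnt u m' (n+1) : ℝ) := by push_cast at this ⊢; linarith
      exact nalpha_ne_int hirr (n+1) (by omega) (cnt u m' (n+1) : ℤ) (by push_cast; push_cast at h2; linarith)
    · omega

lemma phi_step_true (u : ℕ → Bool) {m : ℕ} (h : u m = true) :
    phi u (m + 1) = phi u m + 1 - alph u := by
  have := phi_add u m 1
  rw [cnt_one, h] at this
  norm_num at this
  rw [this]; ring

lemma phi_step_false (u : ℕ → Bool) {m : ℕ} (h : u m = false) :
    phi u (m + 1) = phi u m - alph u := by
  have := phi_add u m 1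
  rw [cnt_one, h] at this
  norm_num at this
  linarith [this]

lemma alph_pos (hirr : Irrational (alph u)) : 0 < alph u := by
  rcases lt_or_eq_of_le (alph_nonneg u) with h | h
  · exact h
  · exfalso
    exact nalpha_ne_int hirr 1 one_pos 0 (by push_cast; linarith)

lemma alph_lt_one (hper : ¬ EventuallyPeriodic u) (hb : IsBalanced u)
    (hirr : Irrational (alph u)) : alph u < 1 := by
  have hk1 : kmin u 1 = 0 := by
    by_contra h
    have h1 : ∀ m, cnt u m 1 ≥ 1 := by
      intro m
      have := kmin_le u 1 m
      omega
    apply hper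
    refine ⟨1, one_pos, 0, fun n _ => ?_⟩
    have ha := h1 n
    have hb' := h1 (n + 1)
    rw [cnt_one] at ha hb'
    by_cases h1 : u n <;> by_cases h2 : u (n+1) <;> simp_all
  have h2 := alph_A2 hb 0
  rw [hk1] at h2
  push_cast at h2
  have hne := nalpha_ne_int hirr 1 one_pos 1
  push_cast at hne
  rcases lt_or_eq_of_le (by linarith : alph u ≤ 1) with h | h
  · exact h
  · exact absurd (by linarith : (1:ℝ) * alph u = 1) hne

lemma u_true_of_phi_lt (hb : IsBalanced u) (hirr : Irrational (alph u)) {m : ℕ}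
    (h : phi u m < alph u) : u m = true := by
  by_contra hf
  rw [Bool.not_eq_true] at hf
  have := phi_step_false u hf
  have := phi_nonneg hb hirr (m + 1)
  linarith

lemma u_false_of_phi_gt (hb : IsBalanced u) (hirr : Irrational (alph u)) {m : ℕ}
    (h : alph u < phi u m) : u m = false := by
  by_contra hf
  rw [Bool.not_eq_false] at hf
  have := phi_step_true u hf
  have := phi_le_one hb hirr (m + 1)
  linarith

lemma u_true_of_phi_zero (hb : IsBalanced u) (hirr : Irrational (alph u)) {m : ℕ}
    (h : phi u m = 0) : u m = true :=
  u_true_of_phi_lt hb hirr (by rw [h]; exact alph_pos hirr)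

lemma u_false_of_phi_one (hper : ¬ EventuallyPeriodic u) (hb : IsBalanced u)
    (hirr : Irrational (alph u)) {m : ℕ}
    (h : phi u m = 1) : u m = false :=
  u_false_of_phi_gt hb hirr (by rw [h]; exact alph_lt_one hper hb hirr)

lemma int_squeeze {x y : ℝ} (z : ℤ) (h : (z : ℝ) = x - y) (hx0 : 0 ≤ x) (hx1 : x ≤ 1)
    (hy0 : 0 < y) (hy1 : y < 1) : x = y := by
  have hz : z = 0 := by
    have h1 : (-1 : ℝ) < (z:ℝ) := by linarith
    have h2 : (z:ℝ) < 1 := by linarith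
    have h1' : (-1 : ℤ) < z := by exact_mod_cast h1
    have h2' : z < 1 := by exact_mod_cast h2
    omega
  rw [hz] at h
  push_cast at h
  linarith

lemma phi_transfer (hb : IsBalanced u) (hirr : Irrational (alph u))
    {t i₀ : ℕ} (n : ℕ) (d : ℝ) (ht : phi u t = phi u i₀ - d)
    (h0 : 0 < phi u (i₀ + n) - d) (h1 : phi u (i₀ + n) - d < 1) :
    phi u (t + n) = phi u (i₀ + n) - d := by
  have e1 := phi_add u t n
  have e2 := phi_add u i₀ n
  refine int_squeeze ((cnt u t n : ℤ) - (cnt u i₀ n : ℤ)) ?_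
    (phi_nonneg hb hirr (t + n)) (phi_le_one hb hirr (t + n)) h0 h1
  push_cast
  rw [e1, e2, ht]
  ring


variable {u : ℕ → Bool}

lemma zero_one_clash (hper : ¬ EventuallyPeriodic u) (hb : IsBalanced u)
    (hirr : Irrational (alph u)) {m₀ m₁ : ℕ}
    (h0 : phi u m₀ = 0) (h1 : phi u m₁ = 1) : False := by
  have e0 : phi u (m₀ + 1) = 1 - alph u := by
    rw [phi_step_true u (u_true_of_phi_zero hb hirr h0), h0]; ring
  have e1 : phi u (m₁ + 1) = 1 - alph u := by
    rw [phi_step_false u (u_false_of_phi_one hper hb hirr h1), h1]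
  have := phi_inj hirr (e0.trans e1.symm)
  have : m₀ = m₁ := by omega
  rw [this, h1] at h0
  norm_num at h0

lemma cyl (hper : ¬ EventuallyPeriodic u) (hb : IsBalanced u)
    (hirr : Irrational (alph u)) {w : List Bool} (hwne : w ≠ []) (hw : IsFactor u w) :
    ∃ a b : ℝ, 0 ≤ a ∧ a < b ∧ b ≤ 1 ∧
      ∀ t, a < phi u t → phi u t < b → OccursAt u w t := by
  obtain ⟨i₀, hocc⟩ := hw
  have hL1 : 0 < w.length := List.length_pos_iff.mpr hwne
  have hLne : (Finset.range w.length).Nonempty := ⟨0, Finset.mem_range.mpr hL1⟩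
  have hα0 := alph_pos hirr
  have hα1 := alph_lt_one hper hb hirr
  by_cases hA : ∀ n < w.length, phi u (i₀ + n) ≠ 0 ∧
      (phi u (i₀ + n) = alph u → u (i₀ + n) = true)
  · -- left interval
    set e : ℕ → ℝ := fun n =>
      if phi u (i₀ + n) = alph u then alph u
      else min (phi u (i₀ + n)) |phi u (i₀ + n) - alph u| with he
    set δ := (Finset.range w.length).inf' hLne e with hδ
    have hδle : ∀ n < w.length, δ ≤ e n := fun n hn =>
      Finset.inf'_le e (Finset.mem_range.mpr hn)
    have hδpos : 0 < δ := by
      rw [hδ, Finset.lt_inf'_iff]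
      intro n hn
      rw [Finset.mem_range] at hn
      rw [he]
      by_cases hc : phi u (i₀ + n) = alph u
      · simpa [hc] using hα0
      · simp only [hc, if_false]
        have hp0 := phi_nonneg hb hirr (i₀ + n)
        have hp1 := (hA n hn).1
        refine lt_min (lt_of_le_of_ne hp0 (Ne.symm hp1)) ?_
        rw [abs_pos]
        intro hcc
        exact hc (by linarith)
    have heφ : ∀ n < w.length, e n ≤ phi u (i₀ + n) := by
      intro n hn
      rw [he]
      by_cases hc : phi u (i₀ + n) = alph u
      · simp [hc]
      · simp only [hc, if_false]
        exact min_le_left _ _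
    refine ⟨phi u i₀ - δ, phi u i₀, ?_, by linarith, phi_le_one hb hirr i₀, ?_⟩
    · have := hδle 0 hL1
      have := heφ 0 hL1
      simp only [Nat.add_zero] at *
      linarith
    · intro t h1 h2
      set d := phi u i₀ - phi u t with hd
      have hd0 : 0 < d := by rw [hd]; linarith
      have hdδ : d < δ := by rw [hd]; linarith
      apply occursAt_of_agree hocc
      intro n hn
      have htr : phi u (t + n) = phi u (i₀ + n) - d := by
        apply phi_transfer hb hirr n d (by rw [hd]; ring)
        · have h3 : d < e n := lt_of_lt_of_le hdδ (hδle n hn)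
          have h4 := heφ n hn
          linarith
        · have := phi_le_one hb hirr (i₀ + n)
          linarith
      rcases lt_trichotomy (phi u (i₀ + n)) (alph u) with hc | hc | hc
      · rw [u_true_of_phi_lt hb hirr hc,
            u_true_of_phi_lt hb hirr (by rw [htr]; linarith)]
      · rw [(hA n hn).2 hc, u_true_of_phi_lt hb hirr (by rw [htr, hc]; linarith)]
      · have h5 : d < phi u (i₀ + n) - alph u := by
          have hne : phi u (i₀ + n) ≠ alph u := ne_of_gt hc
          have h3 : d < e n := lt_of_lt_of_le hdδ (hδle n hn)
          simp only [he, if_neg hne] at h3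
          have h6 : d < |phi u (i₀ + n) - alph u| := lt_of_lt_of_le h3 (min_le_right _ _)
          rwa [abs_of_pos (by linarith)] at h6
        rw [u_false_of_phi_gt hb hirr hc,
            u_false_of_phi_gt hb hirr (by rw [htr]; linarith)]
  · -- right interval; first establish propB
    have hB : ∀ n < w.length, phi u (i₀ + n) ≠ 1 ∧
        (phi u (i₀ + n) = alph u → u (i₀ + n) = false) := by
      by_contra hB0
      push_neg at hA hB0
      have hzero : ∃ m, phi u m = 0 := by
        obtain ⟨n, hn, hcond⟩ := hA
        by_cases hz : phi u (i₀ + n) = 0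
        · exact ⟨i₀ + n, hz⟩
        · obtain ⟨hαeq, hnt⟩ := hcond hz
          have hnt' : u (i₀ + n) = false := by
            cases hcase : u (i₀ + n) <;> simp_all
          refine ⟨i₀ + n + 1, ?_⟩
          rw [phi_step_false u hnt', hαeq]; ring
      have hone : ∃ m, phi u m = 1 := by
        obtain ⟨n, hn, hcond⟩ := hB0
        by_cases hz : phi u (i₀ + n) = 1
        · exact ⟨i₀ + n, hz⟩
        · obtain ⟨hαeq, hnt⟩ := hcond hz
          have hnt' : u (i₀ + n) = true := by
            cases hcase : u (i₀ + n) <;> simp_all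
          refine ⟨i₀ + n + 1, ?_⟩
          rw [phi_step_true u hnt', hαeq]; ring
      obtain ⟨m₀, h0⟩ := hzero
      obtain ⟨m₁, h1⟩ := hone
      exact zero_one_clash hper hb hirr h0 h1
    set e : ℕ → ℝ := fun n =>
      if phi u (i₀ + n) = alph u then 1 - alph u
      else min (1 - phi u (i₀ + n)) |phi u (i₀ + n) - alph u| with he
    set δ := (Finset.range w.length).inf' hLne e with hδ
    have hδle : ∀ n < w.length, δ ≤ e n := fun n hn =>
      Finset.inf'_le e (Finset.mem_range.mpr hn)
    have hδpos : 0 < δ := by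
      rw [hδ, Finset.lt_inf'_iff]
      intro n hn
      rw [Finset.mem_range] at hn
      rw [he]
      by_cases hc : phi u (i₀ + n) = alph u
      · simp only [hc, if_true]; linarith
      · simp only [hc, if_false]
        have hp1 := phi_le_one hb hirr (i₀ + n)
        have hne1 := (hB n hn).1
        refine lt_min (by have := lt_of_le_of_ne hp1 hne1; linarith) ?_
        rw [abs_pos]
        intro hcc
        exact hc (by linarith)
    have heφ : ∀ n < w.length, e n ≤ 1 - phi u (i₀ + n) := by
      intro n hn
      rw [he]
      by_cases hc : phi u (i₀ + n) = alph u
      · simp [hc]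
      · simp only [hc, if_false]
        exact min_le_left _ _
    refine ⟨phi u i₀, phi u i₀ + δ, phi_nonneg hb hirr i₀, by linarith, ?_, ?_⟩
    · have h3 := hδle 0 hL1
      have h4 := heφ 0 hL1
      simp only [Nat.add_zero] at *
      linarith
    · intro t h1 h2
      set d := phi u t - phi u i₀ with hd
      have hd0 : 0 < d := by rw [hd]; linarith
      have hdδ : d < δ := by rw [hd]; linarith
      apply occursAt_of_agree hocc
      intro n hn
      have htr : phi u (t + n) = phi u (i₀ + n) + d := by
        have := phi_transfer hb hirr (t := t) (i₀ := i₀) n (-d) (by rw [hd]; ring)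
          (by have := phi_nonneg hb hirr (i₀ + n); linarith)
          (by have h3 : d < e n := lt_of_lt_of_le hdδ (hδle n hn)
              have h4 := heφ n hn
              linarith)
        rw [this]; ring
      rcases lt_trichotomy (phi u (i₀ + n)) (alph u) with hc | hc | hc
      · have h5 : d < alph u - phi u (i₀ + n) := by
          have hne : phi u (i₀ + n) ≠ alph u := ne_of_lt hc
          have h3 : d < e n := lt_of_lt_of_le hdδ (hδle n hn)
          simp only [he, if_neg hne] at h3
          have h6 : d < |phi u (i₀ + n) - alph u| := lt_of_lt_of_le h3 (min_le_right _ _)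
          rw [abs_of_neg (by linarith : phi u (i₀ + n) - alph u < 0)] at h6
          linarith
        rw [u_true_of_phi_lt hb hirr hc,
            u_true_of_phi_lt hb hirr (by rw [htr]; linarith)]
      · rw [(hB n hn).2 hc, u_false_of_phi_gt hb hirr (by rw [htr, hc]; linarith)]
      · rw [u_false_of_phi_gt hb hirr hc,
            u_false_of_phi_gt hb hirr (by rw [htr]; linarith)]


lemma irr_nat_mul {γ : ℝ} (hγ : Irrational γ) {n : ℕ} (hn : 1 ≤ n) :
    Irrational ((n : ℝ) * γ) := by
  intro ⟨q, hq⟩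
  apply hγ
  refine ⟨q / (n : ℚ), ?_⟩
  have hn' : ((n:ℚ) : ℝ) ≠ 0 := by positivity
  push_cast
  push_cast at hn'
  field_simp
  linarith [hq]

lemma fract_pos_of_irrational {x : ℝ} (hx : Irrational x) : 0 < Int.fract x := by
  rcases lt_or_eq_of_le (Int.fract_nonneg x) with h | h
  · exact h
  · exfalso
    apply hx
    refine ⟨(⌊x⌋ : ℚ), ?_⟩
    have := Int.floor_add_fract x
    rw [← h] at this
    push_cast
    linarith

lemma fract_pigeonhole {γ : ℝ} (hγ : Irrational γ) {ε : ℝ} (hε : 0 < ε) :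
    ∃ n : ℕ, 1 ≤ n ∧ (Int.fract (n * γ) < ε ∨ 1 - ε < Int.fract (n * γ)) := by
  rcases le_or_gt 1 ε with hε1 | hε1
  · exact ⟨1, le_refl 1, Or.inl (lt_of_lt_of_le (Int.fract_lt_one _) hε1)⟩
  obtain ⟨M, hM⟩ := exists_nat_gt (1 / ε)
  have hM0 : 0 < M := by
    have : (0:ℝ) < 1/ε := by positivity
    have : (0:ℝ) < M := lt_trans this hM
    exact_mod_cast this
  have hmap : ∀ k ∈ Finset.range (M + 1),
      (⌊Int.fract ((k:ℝ) * γ) * M⌋).toNat ∈ Finset.range M := by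
    intro k _
    rw [Finset.mem_range]
    have h0 : (0:ℤ) ≤ ⌊Int.fract ((k:ℝ) * γ) * M⌋ :=
      Int.floor_nonneg.mpr (mul_nonneg (Int.fract_nonneg _) (by positivity))
    have h1 : ⌊Int.fract ((k:ℝ) * γ) * M⌋ < (M:ℤ) := by
      rw [Int.floor_lt]
      have := Int.fract_lt_one ((k:ℝ) * γ)
      have hMr : (0:ℝ) < (M:ℝ) := by exact_mod_cast hM0
      push_cast
      nlinarith [Int.fract_nonneg ((k:ℝ) * γ)]
    omega
  obtain ⟨x, hx, y, hy, hne, heq⟩ :=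
    Finset.exists_ne_map_eq_of_card_lt_of_maps_to (by simp) hmap
  obtain ⟨x, y, hxy, hfleq⟩ : ∃ x y : ℕ, x < y ∧
      ⌊Int.fract ((x:ℝ) * γ) * M⌋ = ⌊Int.fract ((y:ℝ) * γ) * M⌋ := by
    have hnn : ∀ k : ℕ, (0:ℤ) ≤ ⌊Int.fract ((k:ℝ) * γ) * M⌋ := fun k =>
      Int.floor_nonneg.mpr (mul_nonneg (Int.fract_nonneg _) (by positivity))
    rcases lt_or_gt_of_ne hne with h | h
    · refine ⟨x, y, h, ?_⟩
      have := hnn x; have := hnn y; omega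
    · refine ⟨y, x, h, ?_⟩
      have := hnn x; have := hnn y; omega
  set d := Int.fract ((y:ℝ) * γ) - Int.fract ((x:ℝ) * γ) with hd
  have hdabs : |d| < ε := by
    have habs : |Int.fract ((y:ℝ)*γ) * M - Int.fract ((x:ℝ)*γ) * M| < 1 :=
      Int.abs_sub_lt_one_of_floor_eq_floor hfleq.symm
    have hMr : (0:ℝ) < (M:ℝ) := by exact_mod_cast hM0
    have h2 : |d| * M < 1 := by
      rw [hd]
      calc |Int.fract ((y:ℝ)*γ) - Int.fract ((x:ℝ)*γ)| * M
          = |Int.fract ((y:ℝ)*γ) - Int.fract ((x:ℝ)*γ)| * |(M:ℝ)| := by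
            rw [abs_of_pos hMr]
        _ = |Int.fract ((y:ℝ)*γ) * M - Int.fract ((x:ℝ)*γ) * M| := by
            rw [← abs_mul]; ring_nf
        _ < 1 := habs
    have h3 : |d| < 1 / M := by
      rw [lt_div_iff₀ hMr]; exact h2
    have h4 : 1 / (M:ℝ) < ε := by
      rw [div_lt_iff₀ hMr]
      rw [div_lt_iff₀ hε] at hM
      nlinarith
    linarith
  refine ⟨y - x, by omega, ?_⟩
  have hyx : ((y - x : ℕ) : ℝ) * γ = d + (⌊(y:ℝ)*γ⌋ - ⌊(x:ℝ)*γ⌋) := by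
    have hy' : Int.fract ((y:ℝ)*γ) = (y:ℝ)*γ - ⌊(y:ℝ)*γ⌋ := rfl
    have hx' : Int.fract ((x:ℝ)*γ) = (x:ℝ)*γ - ⌊(x:ℝ)*γ⌋ := rfl
    rw [hd, hy', hx']
    have : ((y - x : ℕ) : ℝ) = (y:ℝ) - (x:ℝ) := by
      push_cast [Nat.cast_sub hxy.le]; ring
    rw [this]; push_cast; ring
  have hfr : Int.fract (((y - x : ℕ) : ℝ) * γ) = Int.fract d := by
    rw [hyx]
    have : d + ((⌊(y:ℝ)*γ⌋ : ℝ) - (⌊(x:ℝ)*γ⌋ : ℝ)) = d + ((⌊(y:ℝ)*γ⌋ - ⌊(x:ℝ)*γ⌋ : ℤ) : ℝ) := by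
      push_cast; ring
    rw [this, Int.fract_add_intCast]
  have hdne : d ≠ 0 := by
    intro h0
    have : Int.fract (((y - x : ℕ) : ℝ) * γ) = 0 := by rw [hfr, h0, Int.fract_zero]
    have hirr : Irrational (((y - x : ℕ) : ℝ) * γ) := irr_nat_mul hγ (by omega)
    have := fract_pos_of_irrational hirr
    linarith
  rcases lt_or_gt_of_ne hdne with hneg | hpos
  · right
    have hd1 : -1 < d := by
      have := abs_lt.mp hdabs
      linarith
    have : Int.fract d = d + 1 := by
      have h1 : ⌊d⌋ = -1 := by
        rw [Int.floor_eq_iff]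
        constructor
        · push_cast; linarith
        · push_cast; linarith
      rw [Int.fract, h1]
      push_cast; ring
    rw [hfr, this]
    have := abs_lt.mp hdabs
    linarith
  · left
    have : Int.fract d = d := Int.fract_eq_self.mpr ⟨hpos.le, by
      have := abs_lt.mp hdabs; linarith⟩
    rw [hfr, this]
    have := abs_lt.mp hdabs
    linarith

lemma rot_hit {γ : ℝ} (hγ : Irrational γ) (x0 a b : ℝ) (ha : 0 ≤ a) (hab : a < b)
    (hb : b ≤ 1) (S : ℕ) :
    ∃ s : ℕ, S ≤ s ∧ a < Int.fract (x0 + s * γ) ∧ Int.fract (x0 + s * γ) < b := by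
  classical
  obtain ⟨n, hn1, hcase⟩ := fract_pigeonhole hγ (show (0:ℝ) < b - a by linarith)
  set θ := Int.fract ((n:ℝ) * γ) with hθ
  have hθ0 : 0 < θ := fract_pos_of_irrational (irr_nat_mul hγ hn1)
  have hθ1 : θ < 1 := Int.fract_lt_one _
  set r0 := Int.fract (x0 + (S:ℝ) * γ) with hr0
  have hr00 : 0 ≤ r0 := Int.fract_nonneg _
  have hr01 : r0 < 1 := Int.fract_lt_one _
  have key : ∀ k : ℕ, Int.fract (x0 + ((S + k * n : ℕ) : ℝ) * γ) = Int.fract (r0 + k * θ) := by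
    intro k
    rw [Int.fract_eq_fract]
    refine ⟨⌊x0 + (S:ℝ)*γ⌋ + k * ⌊(n:ℝ)*γ⌋, ?_⟩
    have e1 : r0 = (x0 + (S:ℝ)*γ) - ⌊x0 + (S:ℝ)*γ⌋ := rfl
    have e2 : θ = (n:ℝ)*γ - ⌊(n:ℝ)*γ⌋ := rfl
    rw [e1, e2]
    push_cast
    ring
  rcases hcase with hup | hdown
  · -- θ < b - a : upward walk
    have hex : ∃ k : ℕ, 1 + a < r0 + k * θ := by
      obtain ⟨k, hk⟩ := exists_nat_gt ((1 + a - r0) / θ)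
      refine ⟨k, ?_⟩
      rw [div_lt_iff₀ hθ0] at hk
      nlinarith
    set K := Nat.find hex with hK
    have hspec : 1 + a < r0 + K * θ := Nat.find_spec hex
    have hK1 : K ≠ 0 := by
      intro h0
      rw [hK] at h0
      have := Nat.find_spec hex
      rw [h0] at this
      push_cast at this
      linarith
    have hprev : ¬(1 + a < r0 + (K - 1 : ℕ) * θ) := Nat.find_min hex (by omega)
    push_neg at hprev
    have hKK : ((K:ℝ)) = ((K - 1 : ℕ):ℝ) + 1 := by
      have : K - 1 + 1 = K := by omega
      rw [← this]; push_cast; ring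
    have hub : r0 + K * θ < 1 + b := by
      rw [hKK]
      have : θ < b - a := hup
      nlinarith
    refine ⟨S + K * n, by omega, ?_, ?_⟩
    · rw [key K]
      have hval : Int.fract (r0 + K * θ) = r0 + K * θ - 1 := by
        have h1 : Int.fract (r0 + K * θ) = Int.fract (r0 + K * θ - 1) := by
          rw [show r0 + (K:ℝ) * θ - 1 = r0 + K * θ + (-1 : ℤ) by push_cast; ring,
            Int.fract_add_intCast]
        rw [h1, Int.fract_eq_self.mpr ⟨by linarith, by linarith⟩]
      rw [hval]; linarith
    · rw [key K]
      have hval : Int.fract (r0 + K * θ) = r0 + K * θ - 1 := by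
        have h1 : Int.fract (r0 + K * θ) = Int.fract (r0 + K * θ - 1) := by
          rw [show r0 + (K:ℝ) * θ - 1 = r0 + K * θ + (-1 : ℤ) by push_cast; ring,
            Int.fract_add_intCast]
        rw [h1, Int.fract_eq_self.mpr ⟨by linarith, by linarith⟩]
      rw [hval]; linarith
  · -- θ > 1 - (b - a) : downward walk
    set η := 1 - θ with hη
    have hη0 : 0 < η := by rw [hη]; linarith
    have hηs : η < b - a := by rw [hη]; linarith
    have key2 : ∀ k : ℕ, Int.fract (r0 + k * θ) = Int.fract (r0 - k * η) := by
      intro k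
      rw [Int.fract_eq_fract]
      refine ⟨k, ?_⟩
      rw [hη]
      push_cast
      ring
    have hex : ∃ k : ℕ, r0 - k * η < b - 1 := by
      obtain ⟨k, hk⟩ := exists_nat_gt ((r0 - (b - 1)) / η)
      refine ⟨k, ?_⟩
      rw [div_lt_iff₀ hη0] at hk
      nlinarith
    set K := Nat.find hex with hK
    have hspec : r0 - K * η < b - 1 := Nat.find_spec hex
    have hK1 : K ≠ 0 := by
      intro h0
      rw [hK] at h0
      have := Nat.find_spec hex
      rw [h0] at this
      push_cast at this
      linarith
    have hprev : ¬(r0 - (K - 1 : ℕ) * η < b - 1) := Nat.find_min hex (by omega)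
    push_neg at hprev
    have hKK : ((K:ℝ)) = ((K - 1 : ℕ):ℝ) + 1 := by
      have : K - 1 + 1 = K := by omega
      rw [← this]; push_cast; ring
    have hlb : a - 1 < r0 - K * η := by
      rw [hKK]
      nlinarith
    refine ⟨S + K * n, by omega, ?_, ?_⟩
    · rw [key K, key2 K]
      have hval : Int.fract (r0 - K * η) = r0 - K * η + 1 := by
        have h1 : Int.fract (r0 - K * η) = Int.fract (r0 - K * η + 1) := by
          rw [show r0 - (K:ℝ) * η + 1 = r0 - K * η + (1 : ℤ) by push_cast; ring,
            Int.fract_add_intCast]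
        rw [h1, Int.fract_eq_self.mpr ⟨by linarith, by linarith⟩]
      rw [hval]; linarith
    · rw [key K, key2 K]
      have hval : Int.fract (r0 - K * η) = r0 - K * η + 1 := by
        have h1 : Int.fract (r0 - K * η) = Int.fract (r0 - K * η + 1) := by
          rw [show r0 - (K:ℝ) * η + 1 = r0 - K * η + (1 : ℤ) by push_cast; ring,
            Int.fract_add_intCast]
        rw [h1, Int.fract_eq_self.mpr ⟨by linarith, by linarith⟩]
      rw [hval]; linarith


variable {u : ℕ → Bool}

def Bcnt (u : ℕ → Bool) (t : ℕ) : ℕ := (List.range t).countP fun k => u k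
def Acnt (u : ℕ → Bool) (t : ℕ) : ℕ := (List.range t).countP fun k => !u k

lemma Bcnt_succ (u : ℕ → Bool) (t : ℕ) :
    Bcnt u (t + 1) = Bcnt u t + (if u t then 1 else 0) := by
  simp [Bcnt, List.range_succ, List.countP_append, List.countP_cons]

lemma Acnt_succ (u : ℕ → Bool) (t : ℕ) :
    Acnt u (t + 1) = Acnt u t + (if u t then 0 else 1) := by
  simp only [Acnt, List.range_succ, List.countP_append, List.countP_cons]
  cases h : u t <;> simp [h]

lemma Bcnt_eq_cnt (u : ℕ → Bool) (t : ℕ) : Bcnt u t = cnt u 0 t := by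
  induction t with
  | zero => simp [Bcnt]
  | succ t ih =>
      rw [Bcnt_succ, cnt_succ, ih]
      simp

lemma AB_sum (u : ℕ → Bool) (t : ℕ) : Acnt u t + Bcnt u t = t := by
  induction t with
  | zero => simp [Acnt, Bcnt]
  | succ t ih =>
      rw [Acnt_succ, Bcnt_succ]
      cases h : u t <;> simp [h] <;> omega

lemma Bcnt_le (u : ℕ → Bool) (t : ℕ) : Bcnt u t ≤ t := by
  have := AB_sum u t; omega

lemma hfun_eq_Bcnt (u : ℕ → Bool) (t : ℕ) :
    hfun u t = (Bcnt u t : ℝ) - t * alph u := by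
  rw [hfun, Bcnt_eq_cnt]

set_option maxHeartbeats 1000000 in
/-- Well-distributed occurrences for Sturmian sequences. -/
lemma sturm_welldoc (hu : IsSturmian u) {w : List Bool} (hwne : w ≠ [])
    (hw : IsFactor u w) (Q i j : ℕ) (hQ : 0 < Q) :
    ∃ t k k', OccursAt u w t ∧ Acnt u t = i + Q * k ∧ Bcnt u t = j + Q * k' := by
  obtain ⟨hper, hb⟩ := hu
  have hirr : Irrational (alph u) := alph_irrational hper hb
  have hα0 := alph_pos hirr
  have hα1 := alph_lt_one hper hb hirr
  obtain ⟨a, b, ha0, hab, hb1, hcyl⟩ := cyl hper hb hirr hwne hw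
  obtain ⟨N₁, hN₁⟩ := exists_nat_gt (((j:ℝ) + 1 + |rho u|) / alph u)
  obtain ⟨N₂, hN₂⟩ := exists_nat_gt (((i:ℝ) + 1 + |rho u|) / (1 - alph u))
  set N₀ := max N₁ N₂ with hN₀
  have hBge : ∀ t : ℕ, N₀ ≤ t → (j : ℝ) ≤ t * alph u + rho u := by
    intro t ht
    have h1 : (N₁ : ℝ) ≤ t := by
      have : N₁ ≤ t := le_trans (le_max_left _ _) ht
      exact_mod_cast this
    rw [div_lt_iff₀ hα0] at hN₁
    have h2 : (N₁:ℝ) * alph u ≤ (t:ℝ) * alph u := by nlinarith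
    have h3 : -|rho u| ≤ rho u := neg_abs_le _
    linarith
  have hAge : ∀ t : ℕ, N₀ ≤ t → (i : ℝ) ≤ t * (1 - alph u) - rho u - 1 := by
    intro t ht
    have h1 : (N₂ : ℝ) ≤ t := by
      have : N₂ ≤ t := le_trans (le_max_right _ _) ht
      exact_mod_cast this
    rw [div_lt_iff₀ (by linarith : (0:ℝ) < 1 - alph u)] at hN₂
    have h2 : (N₂:ℝ) * (1 - alph u) ≤ (t:ℝ) * (1 - alph u) := by nlinarith
    have h3 : rho u ≤ |rho u| := le_abs_self _
    linarith
  have hQr : (0:ℝ) < (Q:ℝ) := by exact_mod_cast hQ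
  obtain ⟨s, hsS, hmem1, hmem2⟩ := rot_hit hirr.neg
    (((j:ℝ) - rho u - ((i:ℝ)+(j:ℝ)) * alph u) / Q) (a / Q) (b / Q)
    (by positivity) (div_lt_div_of_pos_right hab hQr)
    (by rw [div_le_one hQr]; have h9 : (1:ℝ) ≤ Q := (by exact_mod_cast hQ); linarith) N₀
  set t := i + j + Q * s with htdef
  have htN : N₀ ≤ t := by
    have h1 : s ≤ Q * s := Nat.le_mul_of_pos_left s hQ
    omega
  have htcast : (t:ℝ) = (i:ℝ) + j + Q * s := by rw [htdef]; push_cast; ring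
  -- rewrite the fract argument
  have harg : ((j:ℝ) - rho u - ((i:ℝ)+(j:ℝ)) * alph u) / Q + (s:ℝ) * (-alph u)
      = ((j:ℝ) - rho u - t * alph u) / Q := by
    rw [htcast]
    field_simp
    ring
  rw [harg] at hmem1 hmem2
  set F := ((j:ℝ) - rho u - t * alph u) / Q with hF
  set f := Int.fract F with hf
  set z := ⌊F⌋ with hz
  have hzf : (j:ℝ) - rho u - t * alph u = Q * z + Q * f := by
    have := Int.floor_add_fract F
    rw [← hz, ← hf] at this
    have hFQ : (j:ℝ) - rho u - t * alph u = Q * F := by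
      rw [hF]; field_simp
    rw [hFQ, ← this]; ring
  have hQf1 : a < Q * f := by
    rw [div_lt_iff₀ hQr] at hmem1
    calc a < f * Q := hmem1
      _ = Q * f := by ring
  have hQf2 : Q * f < b := by
    rw [lt_div_iff₀ hQr] at hmem2
    calc (Q:ℝ) * f = f * Q := by ring
      _ < b := hmem2
  have hQf0 : 0 < Q * f := lt_of_le_of_lt ha0 hQf1
  have hQf01 : Q * f < 1 := lt_of_lt_of_le hQf2 hb1
  -- phi u t = Q * f
  have hphi : phi u t = Q * f := by
    refine int_squeeze ((Bcnt u t : ℤ) - (j:ℤ) + (Q:ℤ) * z) ?_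
      (phi_nonneg hb hirr t) (phi_le_one hb hirr t) hQf0 hQf01
    have e1 : phi u t = (Bcnt u t : ℝ) - t * alph u - rho u := by
      rw [phi, hfun_eq_Bcnt]
    rw [e1]
    push_cast
    linarith [hzf]
  have hocc : OccursAt u w t := hcyl t (by rw [hphi]; exact hQf1) (by rw [hphi]; exact hQf2)
  -- value of Bcnt
  have hBt : (Bcnt u t : ℝ) = (j:ℝ) - Q * z := by
    have e1 : phi u t = (Bcnt u t : ℝ) - t * alph u - rho u := by
      rw [phi, hfun_eq_Bcnt]
    rw [e1] at hphi
    linarith [hzf]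
  have hBtge : (j:ℝ) ≤ (Bcnt u t : ℝ) := by
    have h1 := hBge t htN
    have e1 : (Bcnt u t : ℝ) = t * alph u + rho u + Q * f := by
      have e2 : phi u t = (Bcnt u t : ℝ) - t * alph u - rho u := by
        rw [phi, hfun_eq_Bcnt]
      rw [e2] at hphi
      linarith
    rw [e1]
    linarith
  have hzneg : z ≤ 0 := by
    by_contra hzpos
    push_neg at hzpos
    have h1 : (1:ℝ) ≤ (z:ℝ) := by exact_mod_cast hzpos
    nlinarith [hBt, hBtge, hQr]
  have hBtZ : (Bcnt u t : ℤ) = (j:ℤ) - (Q:ℤ) * z := by exact_mod_cast hBt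
  set k' := (-z).toNat with hk'
  have hk'z : (k' : ℤ) = -z := Int.toNat_of_nonneg (by omega)
  have hBfinal : Bcnt u t = j + Q * k' := by
    have : (Bcnt u t : ℤ) = (j:ℤ) + (Q:ℤ) * (k' : ℤ) := by
      rw [hk'z, hBtZ]; ring
    exact_mod_cast this
  -- value of Acnt
  have hABs := AB_sum u t
  have hAcast : (Acnt u t : ℝ) = (t:ℝ) - (Bcnt u t : ℝ) := by
    have : (Acnt u t : ℝ) + (Bcnt u t : ℝ) = (t:ℝ) := by exact_mod_cast hABs
    linarith
  have hAtge : (i:ℝ) ≤ (Acnt u t : ℝ) := by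
    have h1 := hAge t htN
    have e1 : (Bcnt u t : ℝ) = t * alph u + rho u + Q * f := by
      have e2 : phi u t = (Bcnt u t : ℝ) - t * alph u - rho u := by
        rw [phi, hfun_eq_Bcnt]
      rw [e2] at hphi
      linarith
    rw [hAcast, e1]
    have hexp : (t:ℝ) * (1 - alph u) = (t:ℝ) - (t:ℝ) * alph u := by ring
    linarith [h1, hQf01, hexp]
  have hAZ : (Acnt u t : ℤ) = (i:ℤ) + (Q:ℤ) * ((s:ℤ) - (k':ℤ)) := by
    have h1 : (Acnt u t : ℤ) = (t:ℤ) - (Bcnt u t : ℤ) := by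
      have : (Acnt u t : ℤ) + (Bcnt u t : ℤ) = (t:ℤ) := by exact_mod_cast hABs
      linarith
    have h2 : (Bcnt u t : ℤ) = (j:ℤ) + (Q:ℤ) * (k':ℤ) := by exact_mod_cast hBfinal
    have h3 : (t:ℤ) = (i:ℤ) + (j:ℤ) + (Q:ℤ) * (s:ℤ) := by rw [htdef]; push_cast; ring
    rw [h1, h2, h3]; ring
  have hsk : (0:ℤ) ≤ (s:ℤ) - (k':ℤ) := by
    by_contra hneg
    push_neg at hneg
    have h1 : (s:ℤ) - (k':ℤ) ≤ -1 := by omega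
    have h2 : (i:ℤ) ≤ (Acnt u t : ℤ) := by exact_mod_cast hAtge
    have hQZ : (1:ℤ) ≤ (Q:ℤ) := by exact_mod_cast hQ
    nlinarith [hAZ]
  set k := ((s:ℤ) - (k':ℤ)).toNat with hkk
  have hkz : (k : ℤ) = (s:ℤ) - (k':ℤ) := Int.toNat_of_nonneg hsk
  have hAfinal : Acnt u t = i + Q * k := by
    have : (Acnt u t : ℤ) = (i:ℤ) + (Q:ℤ) * (k:ℤ) := by rw [hkz, hAZ]
    exact_mod_cast this
  exact ⟨t, k, k', hocc, hAfinal, hBfinal⟩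



variable {A : Type*}

lemma gap_period {y : ℕ → A} (hy : IsConstantGap y) (i L : ℕ) :
    ∃ P, 0 < P ∧ ∀ n < L, ∀ k, y (i + n + k * P) = y (i + n) := by
  have hex : ∀ n : ℕ, ∃ g, 0 < g ∧ ∀ m, y m = y (i + n) → y (m + g) = y (i + n) := by
    intro n
    obtain ⟨g, hg, hcl⟩ := hy (y (i + n)) ⟨i + n, rfl⟩
    exact ⟨g, hg, fun m hm => (hcl m hm).1⟩
  choose g hgpos hgcl using hex
  refine ⟨∏ n ∈ Finset.range L, g n, Finset.prod_pos (fun n _ => hgpos n), ?_⟩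
  intro n hn k
  have hmult : ∀ d, y (i + n + d * g n) = y (i + n) := by
    intro d
    induction d with
    | zero => simp
    | succ d ih =>
        have h2 := hgcl n _ ih
        rw [show i + n + (d+1) * g n = (i + n + d * g n) + g n by ring]
        exact h2
  obtain ⟨c, hc⟩ := Finset.dvd_prod_of_mem g (Finset.mem_range.mpr hn)
  rw [hc, show i + n + k * (g n * c) = i + n + (k * c) * g n by ring]
  exact hmult (k * c)

lemma length_colourWord (y y' : ℕ → A) (w : List Bool) :
    (colourWord y y' w).length = w.length := by
  induction w generalizing y y' with
  | nil => rfl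
  | cons c w ih =>
      cases c <;> simp [colourWord, ih]

lemma colourWord_congr (w : List Bool) (y₁ y₂ y₁' y₂' : ℕ → A)
    (h : ∀ n < w.length, y₁ n = y₂ n) (h' : ∀ n < w.length, y₁' n = y₂' n) :
    colourWord y₁ y₁' w = colourWord y₂ y₂' w := by
  induction w generalizing y₁ y₂ y₁' y₂' with
  | nil => rfl
  | cons c w ih =>
      cases c
      · rw [show colourWord y₁ y₁' (false :: w) =
              y₁ 0 :: colourWord (fun n => y₁ (n+1)) y₁' w from rfl,
            show colourWord y₂ y₂' (false :: w) =
              y₂ 0 :: colourWord (fun n => y₂ (n+1)) y₂' w from rfl]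
        rw [h 0 (by simp)]
        rw [ih (fun n => y₁ (n+1)) (fun n => y₂ (n+1)) y₁' y₂'
          (fun n hn => h (n+1) (by simp; omega)) (fun n hn => h' n (by simp; omega))]
      · rw [show colourWord y₁ y₁' (true :: w) =
              y₁' 0 :: colourWord y₁ (fun n => y₁' (n+1)) w from rfl,
            show colourWord y₂ y₂' (true :: w) =
              y₂' 0 :: colourWord y₂ (fun n => y₂' (n+1)) w from rfl]
        rw [h' 0 (by simp)]
        rw [ih y₁ y₂ (fun n => y₁' (n+1)) (fun n => y₂' (n+1))
          (fun n hn => h n (by simp; omega)) (fun n hn => h' (n+1) (by simp; omega))]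

lemma colour_factorAt (u : ℕ → Bool) (y y' : ℕ → A) :
    ∀ (w : List Bool) (t : ℕ), OccursAt u w t →
    factorAt (colour u y y') t w.length =
      colourWord (fun n => y (n + Acnt u t)) (fun n => y' (n + Bcnt u t)) w := by
  intro w
  induction w with
  | nil => intro t _; rfl
  | cons c w ih =>
      intro t hocc
      obtain ⟨hc, hocc'⟩ := occursAt_cons hocc
      rw [List.length_cons, factorAt_succ]
      have hhead : colour u y y' t = if u t then y' (Bcnt u t) else y (Acnt u t) := rfl
      cases hut : u t
      · rw [hut] at hc
        subst hc
        rw [show colourWord (fun n => y (n + Acnt u t)) (fun n => y' (n + Bcnt u t)) (false :: w) =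
              (fun n => y (n + Acnt u t)) 0 ::
                colourWord (fun n => y (n + 1 + Acnt u t)) (fun n => y' (n + Bcnt u t)) w from rfl]
        congr 1
        · rw [hhead, hut]; simp
        · rw [ih (t+1) hocc']
          have e1 : (fun n => y (n + Acnt u (t+1))) = (fun n => y (n + 1 + Acnt u t)) := by
            funext n
            congr 1
            rw [Acnt_succ, hut, if_neg Bool.false_ne_true]
            omega
          have e2 : (fun n => y' (n + Bcnt u (t+1))) = (fun n => y' (n + Bcnt u t)) := by
            funext n
            congr 1
            rw [Bcnt_succ, hut, if_neg Bool.false_ne_true]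
            omega
          rw [e1, e2]
      · rw [hut] at hc
        subst hc
        rw [show colourWord (fun n => y (n + Acnt u t)) (fun n => y' (n + Bcnt u t)) (true :: w) =
              (fun n => y' (n + Bcnt u t)) 0 ::
                colourWord (fun n => y (n + Acnt u t)) (fun n => y' (n + 1 + Bcnt u t)) w from rfl]
        congr 1
        · rw [hhead, hut]; simp
        · rw [ih (t+1) hocc']
          have e1 : (fun n => y' (n + Bcnt u (t+1))) = (fun n => y' (n + 1 + Bcnt u t)) := by
            funext n
            congr 1
            rw [Bcnt_succ, hut, if_pos rfl]
            omega
          have e2 : (fun n => y (n + Acnt u (t+1))) = (fun n => y (n + Acnt u t)) := by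
            funext n
            congr 1
            rw [Acnt_succ, hut, if_pos rfl]
            omega
          rw [e1, e2]

lemma colour_shift_factor {u : ℕ → Bool} (hu : IsSturmian u) {y y' : ℕ → A}
    (hy : IsConstantGap y) (hy' : IsConstantGap y') {w : List Bool} (hw : IsFactor u w)
    (i j : ℕ) :
    IsFactor (colour u y y') (colourWord (fun n => y (n + i)) (fun n => y' (n + j)) w) := by
  rcases eq_or_ne w [] with rfl | hwne
  · exact ⟨0, by simp [OccursAt, colourWord, factorAt]⟩
  obtain ⟨P, hP, hPy⟩ := gap_period hy i w.length
  obtain ⟨P', hP', hPy'⟩ := gap_period hy' j w.length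
  obtain ⟨t, k, k', hocc, hA, hB⟩ := sturm_welldoc hu hwne hw (P * P') i j (by positivity)
  refine ⟨t, ?_⟩
  rw [OccursAt, length_colourWord, colour_factorAt u y y' w t hocc]
  apply colourWord_congr
  · intro n hn
    have h1 := hPy n hn (P' * k)
    rw [show n + i = i + n by ring, show n + Acnt u t = i + n + (P' * k) * P by rw [hA]; ring]
    exact h1.symm
  · intro n hn
    have h1 := hPy' n hn (P * k')
    rw [show n + j = j + n by ring, show n + Bcnt u t = j + n + (P * k') * P' by rw [hB]; ring]
    exact h1.symm

lemma factor_colour_decomp (u : ℕ → Bool) (y y' : ℕ → A) {x : List A}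
    (hx : IsFactor (colour u y y') x) :
    ∃ (wu : List Bool) (t : ℕ), OccursAt u wu t ∧
      x = colourWord (fun n => y (n + Acnt u t)) (fun n => y' (n + Bcnt u t)) wu := by
  obtain ⟨t, hocc⟩ := hx
  refine ⟨factorAt u t x.length, t, occursAt_factorAt _ _ _, ?_⟩
  have h1 := colour_factorAt u y y' (factorAt u t x.length) t (occursAt_factorAt u t x.length)
  rw [length_factorAt] at h1
  conv_lhs => rw [hocc]
  exact h1

lemma factor_colour_mono {u u₂ : ℕ → Bool} (hu₂ : IsSturmian u₂) {y y' : ℕ → A}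
    (hy : IsConstantGap y) (hy' : IsConstantGap y')
    (hsub : ∀ x : List Bool, IsFactor u x → IsFactor u₂ x) :
    ∀ x : List A, IsFactor (colour u y y') x → IsFactor (colour u₂ y y') x := by
  intro x hx
  obtain ⟨wu, t, hocc, hxeq⟩ := factor_colour_decomp u y y' hx
  rw [hxeq]
  exact colour_shift_factor hu₂ hy hy' (hsub wu ⟨t, hocc⟩) (Acnt u t) (Bcnt u t)

lemma hpf_mono {v v₂ : ℕ → A} (h : ∀ x : List A, IsFactor v x → IsFactor v₂ x)
    {w : List A} {n : ℕ} : HasPowerFactor v w n → HasPowerFactor v₂ w n := by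
  rintro ⟨hne, i, hk⟩
  obtain ⟨i₂, hocc⟩ := h (factorAt v i n) ⟨i, occursAt_factorAt v i n⟩
  refine ⟨hne, i₂, fun k hkn => ?_⟩
  have hlen : (factorAt v i n).length = n := length_factorAt v i n
  have h1 : (factorAt v i n)[k]'(by rw [hlen]; exact hkn) = v₂ (i₂ + k) :=
    hocc.apply (by rw [hlen]; exact hkn)
  rw [← h1, getElem_factorAt v i n k hkn, hk k hkn]
  have hlt : k % w.length < w.length := Nat.mod_lt _ (List.length_pos_iff.mpr hne)
  rw [List.getD_eq_getElem _ _ hlt, List.getD_eq_getElem _ _ hlt]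

lemma critExp_eq_of_lang {v v₂ : ℕ → A} (h : ∀ x : List A, IsFactor v x ↔ IsFactor v₂ x) :
    critExp v = critExp v₂ ∧ acritExp v = acritExp v₂ := by
  have hp : ∀ (w : List A) (n : ℕ), HasPowerFactor v w n ↔ HasPowerFactor v₂ w n := by
    intro w n
    exact ⟨hpf_mono (fun x => (h x).1), hpf_mono (fun x => (h x).2)⟩
  have hcrit : critExp v = critExp v₂ := by
    unfold critExp
    congr 1
    ext e
    constructor
    · rintro ⟨w, n, hw, rfl⟩; exact ⟨w, n, (hp w n).1 hw, rfl⟩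
    · rintro ⟨w, n, hw, rfl⟩; exact ⟨w, n, (hp w n).2 hw, rfl⟩
  have hmax : ∀ l, maxExpLen v l = maxExpLen v₂ l := by
    intro l
    unfold maxExpLen
    congr 1
    ext e
    constructor
    · rintro ⟨w, n, hl, hw, rfl⟩; exact ⟨w, n, hl, (hp w n).1 hw, rfl⟩
    · rintro ⟨w, n, hl, hw, rfl⟩; exact ⟨w, n, hl, (hp w n).2 hw, rfl⟩
  refine ⟨hcrit, ?_⟩
  have hfun2 : (fun l => maxExpLen v l) = fun l => maxExpLen v₂ l := funext hmax
  unfold acritExp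
  rw [hcrit, hfun2]


end Aux

/-- Let `v = colour(u, y, y')` with `u` Sturmian and `y`, `y'`
constant gap sequences over disjoint alphabets, and let `w` be a factor of `u`.
Then for all `i, j`, the word obtained by colouring `w` with the shifted
sequences `σ^i(y)` and `σ^j(y')` is a factor of `v`. In particular, any
Sturmian sequence `u₂` with the same language as `u` satisfies
`E(colour(u₂, y, y')) = E(v)` and `E*(colour(u₂, y, y')) = E*(v)`. -/
theorem colour_shifted_factor_and_invariance
    {A : Type*} (u : ℕ → Bool) (y y' : ℕ → A)
    (hu : IsSturmian u)
    (hy : IsConstantGap y) (hy' : IsConstantGap y')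
    (hdisj : ∀ m n, y m ≠ y' n)
    (w : List Bool) (hw : IsFactor u w) :
    (∀ i j : ℕ,
      IsFactor (colour u y y')
        (colourWord (fun n => y (n + i)) (fun n => y' (n + j)) w)) ∧
    (∀ u₂ : ℕ → Bool, IsSturmian u₂ → (∀ x, IsFactor u₂ x ↔ IsFactor u x) →
      critExp (colour u₂ y y') = critExp (colour u y y') ∧
      acritExp (colour u₂ y y') = acritExp (colour u y y')) := by
  constructor
  · intro i j
    exact colour_shift_factor hu hy hy' hw i j
  · intro u₂ hu₂ hlang
    have h1 : ∀ x : List A, IsFactor (colour u₂ y y') x → IsFactor (colour u y y') x :=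
      factor_colour_mono hu hy hy' (fun x hx => (hlang x).mp hx)
    have h2 : ∀ x : List A, IsFactor (colour u y y') x → IsFactor (colour u₂ y y') x :=
      factor_colour_mono hu₂ hy hy' (fun x hx => (hlang x).mpr hx)
    exact critExp_eq_of_lang (fun x => ⟨h1 x, h2 x⟩)


end Paper
end

section
/- Every constant gap sequence over an alphabet of d letters has minimal period at most 2^{d−1}. -/
open Filter Topology Matrix
open scoped ENNReal

namespace Paper

namespace CGap

open Finset

instance (D x : ℕ) : DecidablePred (fun y => y ≡ x [MOD D]) := fun _ => instDecidableEqNat _ _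

variable {ι : Type*} [Fintype ι] [DecidableEq ι]

def cset (n : ℕ) (a gp : ι → ℕ) (D : ℕ) (i : ι) (x : ℕ) : Finset ℕ :=
  (range n).filter (fun y => y ≡ x [MOD D] ∧ y ≡ a i [MOD gp i])

def Ff (n : ℕ) (a gp : ι → ℕ) (D : ℕ) (i : ι) : ℕ → ℚ := fun x => ((cset n a gp D i x).card : ℚ)

def Vd (n : ℕ) (a gp : ι → ℕ) (D : ℕ) : Submodule ℚ (ℕ → ℚ) :=
  Submodule.span ℚ (Set.range (Ff n a gp D))

def Av (n D : ℕ) : (ℕ → ℚ) →ₗ[ℚ] (ℕ → ℚ) where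
  toFun f := fun x => ∑ y ∈ (range n).filter (fun y => y ≡ x [MOD D]), f y
  map_add' f h := by funext x; simp [Finset.sum_add_distrib]
  map_smul' c f := by funext x; simp [Finset.mul_sum]

lemma count_res {n D : ℕ} (hD : D ∣ n) (hD0 : 0 < D) (r : ℕ) :
    ((range n).filter (fun y => y ≡ r [MOD D])).card = n / D := by
  rw [show n / D = (range (n / D)).card by simp]
  apply Finset.card_nbij' (fun y => y / D) (fun k => D * k + r % D)
  · intro a ha
    simp only [Finset.mem_coe, mem_filter, mem_range] at ha ⊢
    exact Nat.div_lt_div_of_lt_of_dvd hD ha.1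
  · intro k hk
    simp only [Finset.mem_coe, mem_range] at hk
    simp only [Finset.mem_coe, mem_filter, mem_range]
    constructor
    · calc D * k + r % D < D * k + D := by
            have := Nat.mod_lt r hD0; omega
        _ = D * (k + 1) := by ring
        _ ≤ D * (n / D) := Nat.mul_le_mul_left D (by omega)
        _ = n := Nat.mul_div_cancel' hD
    · show (D * k + r % D) % D = r % D
      simp [Nat.mul_add_mod, Nat.mod_mod_of_dvd]
  · intro a ha
    simp only [Finset.mem_coe, mem_filter, mem_range] at ha
    beta_reduce
    have h2 : a % D = r % D := ha.2
    have := Nat.div_add_mod a D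
    omega
  · intro k hk
    simp only [Finset.mem_coe, mem_range] at hk
    beta_reduce
    rw [Nat.mul_add_div hD0]
    have : r % D / D = 0 := Nat.div_eq_of_lt (Nat.mod_lt r hD0)
    omega

lemma shift_count {n : ℕ} (hn : 0 < n) {m₁ m₂ m₃ : ℕ} (h₁ : m₁ ∣ n) (h₂ : m₂ ∣ n) (h₃ : m₃ ∣ n)
    (r₁ r₂ r₃ z : ℕ) :
    ((range n).filter (fun y => y ≡ r₁ [MOD m₁] ∧ y ≡ r₂ [MOD m₂] ∧ y ≡ r₃ [MOD m₃])).card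
  = ((range n).filter (fun y => y ≡ r₁ + z [MOD m₁] ∧ y ≡ r₂ + z [MOD m₂] ∧ y ≡ r₃ + z [MOD m₃])).card := by
  set w := n * (z + 1) - z with hw
  have hzw : z + w = n * (z + 1) := by
    have : z < n * (z + 1) := by nlinarith
    omega
  have fwd : ∀ (m : ℕ), m ∣ n → ∀ y r : ℕ, y ≡ r [MOD m] → (y + z) % n ≡ r + z [MOD m] := by
    intro m hm y r hyr
    calc (y + z) % n ≡ y + z [MOD m] := ((Nat.mod_modEq (y + z) n).of_dvd hm)
      _ ≡ r + z [MOD m] := hyr.add_right z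
  have bwd : ∀ (m : ℕ), m ∣ n → ∀ y r : ℕ, y ≡ r + z [MOD m] → (y + w) % n ≡ r [MOD m] := by
    intro m hm y r hyr
    calc (y + w) % n ≡ y + w [MOD m] := ((Nat.mod_modEq (y + w) n).of_dvd hm)
      _ ≡ r + z + w [MOD m] := hyr.add_right w
      _ ≡ r [MOD m] := by
          have hd : m ∣ (r + (z + w)) - r := by
            simp only [Nat.add_sub_cancel_left]
            exact dvd_trans hm (by rw [hzw] at *; exact Dvd.intro _ rfl)
          have h' : r ≤ r + (z + w) := by omega
          have := (Nat.modEq_iff_dvd' h').mpr hd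
          rw [← add_assoc] at this
          exact this.symm
  apply Finset.card_nbij' (fun y => (y + z) % n) (fun y => (y + w) % n)
  · intro a ha
    simp only [Finset.mem_coe, mem_filter, mem_range] at ha ⊢
    exact ⟨Nat.mod_lt _ hn, fwd _ h₁ _ _ ha.2.1, fwd _ h₂ _ _ ha.2.2.1, fwd _ h₃ _ _ ha.2.2.2⟩
  · intro a ha
    simp only [Finset.mem_coe, mem_filter, mem_range] at ha ⊢
    exact ⟨Nat.mod_lt _ hn, bwd _ h₁ _ _ ha.2.1, bwd _ h₂ _ _ ha.2.2.1, bwd _ h₃ _ _ ha.2.2.2⟩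
  · intro a ha
    simp only [Finset.mem_coe, mem_filter, mem_range] at ha
    beta_reduce
    rw [Nat.mod_add_mod, add_assoc, hzw, Nat.add_mul_mod_self_left, Nat.mod_eq_of_lt ha.1]
  · intro a ha
    simp only [Finset.mem_coe, mem_filter, mem_range] at ha
    beta_reduce
    rw [Nat.mod_add_mod, add_assoc, add_comm w z, hzw, Nat.add_mul_mod_self_left,
      Nat.mod_eq_of_lt ha.1]

lemma Av_Ff {n D D' : ℕ} (hDD' : D ∣ D') (hD'n : D' ∣ n) (hD'0 : 0 < D')
    (a gp : ι → ℕ) (i : ι) :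
    Av n D (Ff n a gp D' i) = ((n / D' : ℕ) : ℚ) • Ff n a gp D i := by
  funext x
  show (∑ y ∈ (range n).filter (fun y => y ≡ x [MOD D]), ((cset n a gp D' i y).card : ℚ)) = _
  have hcast : ∀ y, ((cset n a gp D' i y).card : ℚ)
      = ∑ z ∈ range n, if (z ≡ y [MOD D'] ∧ z ≡ a i [MOD gp i]) then (1:ℚ) else 0 := by
    intro y
    rw [cset, Finset.sum_boole]
  simp only [hcast]
  rw [Finset.sum_comm]
  have inner : ∀ z ∈ range n,
      (∑ y ∈ (range n).filter (fun y => y ≡ x [MOD D]), if (z ≡ y [MOD D'] ∧ z ≡ a i [MOD gp i]) then (1:ℚ) else 0)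
      = if (z ≡ x [MOD D] ∧ z ≡ a i [MOD gp i]) then ((n / D' : ℕ) : ℚ) else 0 := by
    intro z _
    by_cases hza : z ≡ a i [MOD gp i]
    · by_cases hzx : z ≡ x [MOD D]
      · simp only [hza, and_true, hzx, if_true]
        rw [Finset.sum_boole]
        have heqf : (((range n).filter (fun y => y ≡ x [MOD D])).filter (fun y => z ≡ y [MOD D']))
            = (range n).filter (fun y => y ≡ z [MOD D']) := by
          ext y
          simp only [mem_filter, mem_range]
          constructor
          · rintro ⟨⟨h0, _⟩, h2⟩; exact ⟨h0, h2.symm⟩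
          · intro ⟨h0, h⟩
            exact ⟨⟨h0, ((h.of_dvd hDD').trans hzx)⟩, h.symm⟩
        rw [heqf, count_res hD'n hD'0]
      · simp only [hzx, false_and, if_false]
        apply Finset.sum_eq_zero
        intro y hy
        simp only [mem_filter, mem_range] at hy
        rw [if_neg]
        rintro ⟨h1, _⟩
        exact hzx ((h1.of_dvd hDD').trans hy.2)
    · simp only [hza, and_false, if_false]
      apply Finset.sum_eq_zero
      intro y _
      simp [hza]
  rw [Finset.sum_congr rfl inner]
  have expand : ∀ z : ℕ, (if (z ≡ x [MOD D] ∧ z ≡ a i [MOD gp i]) then ((n / D' : ℕ) : ℚ) else 0)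
      = ((n / D' : ℕ) : ℚ) * (if (z ≡ x [MOD D] ∧ z ≡ a i [MOD gp i]) then (1:ℚ) else 0) := by
    intro z; split <;> ring
  rw [Finset.sum_congr rfl (fun z _ => expand z), ← Finset.mul_sum, Finset.sum_boole]
  simp [Ff, cset, smul_eq_mul]

lemma map_Vd {n D D' : ℕ} (hn : 0 < n) (hDD' : D ∣ D') (hD'n : D' ∣ n) (hD'0 : 0 < D')
    (a gp : ι → ℕ) :
    Submodule.map (Av n D) (Vd n a gp D') = Vd n a gp D := by
  have hpos : 0 < n / D' := Nat.div_pos (Nat.le_of_dvd hn hD'n) hD'0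
  have h0 : ((n / D' : ℕ) : ℚ) ≠ 0 := by exact_mod_cast hpos.ne'
  rw [Vd, Vd, Submodule.map_span]
  apply le_antisymm
  · rw [Submodule.span_le]
    rintro _ ⟨_, ⟨i, rfl⟩, rfl⟩
    rw [Av_Ff hDD' hD'n hD'0]
    exact Submodule.smul_mem _ _ (Submodule.subset_span ⟨i, rfl⟩)
  · rw [Submodule.span_le]
    rintro _ ⟨i, rfl⟩
    have : Ff n a gp D i = ((n / D' : ℕ) : ℚ)⁻¹ • (Av n D (Ff n a gp D' i)) := by
      rw [Av_Ff hDD' hD'n hD'0, smul_smul, inv_mul_cancel₀ h0, one_smul]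
    rw [this]
    exact Submodule.smul_mem _ _
      (Submodule.subset_span (Set.mem_image_of_mem _ ⟨i, rfl⟩))

set_option maxHeartbeats 1600000 in
lemma step {n : ℕ} (a gp : ι → ℕ) (hn : 0 < n) (hgn : ∀ i, gp i ∣ n)
    (hcov : ∀ y : ℕ, ∃! i, y ≡ a i [MOD gp i])
    (htop : ∀ q k, Nat.Prime q → q ^ k ∣ n → ∃ i, q ^ k ∣ gp i)
    {p D₀ : ℕ} (hp : p.Prime) (hD : p * D₀ ∣ n) :
    Module.finrank ℚ (Vd n a gp D₀) + (p - 1) ≤ Module.finrank ℚ (Vd n a gp (p * D₀)) := by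
  classical
  have hg0 : ∀ i, gp i ≠ 0 := by
    intro i h
    have := hgn i; rw [h] at this; exact absurd (Nat.eq_zero_of_zero_dvd this) hn.ne'
  set D := p * D₀ with hDdef
  have hD0 : 0 < D := Nat.pos_of_dvd_of_pos hD hn
  have hD₀0 : 0 < D₀ := by
    rcases Nat.eq_zero_or_pos D₀ with h | h
    · subst h; simp [hDdef] at hD0
    · exact h
  have hD₀n : D₀ ∣ n := (dvd_mul_left D₀ p).trans hD
  set u := D₀.factorization p with hu
  set q' := p ^ (u + 1) with hq'
  have hq'D : q' ∣ D := by
    rw [hq', pow_succ']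
    exact mul_dvd_mul_left p (Nat.ordProj_dvd D₀ p)
  have hq'n : q' ∣ n := hq'D.trans hD
  have hq'0 : 0 < q' := pow_pos hp.pos _
  have hq'D₀ : ¬ q' ∣ D₀ := Nat.pow_succ_factorization_not_dvd hD₀0.ne' hp
  -- the top witness class
  obtain ⟨cs, hcs⟩ := htop p (u + 1) hp hq'n
  set e := n.factorization p with he
  have hue : u + 1 ≤ e := (hp.pow_dvd_iff_le_factorization hn.ne').mp hq'n
  -- the shifts
  have hcop : (p ^ e).Coprime (n / p ^ e) :=
    Nat.Coprime.pow_left _ (Nat.coprime_ordCompl hp hn.ne')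
  set z : ℕ → ℕ := fun t => (Nat.chineseRemainder hcop (t * p ^ u) 0).1 with hzdef
  have hz1 : ∀ t, z t ≡ t * p ^ u [MOD p ^ e] := fun t => (Nat.chineseRemainder hcop _ 0).2.1
  have hz2 : ∀ t, (n / p ^ e) ∣ z t := fun t =>
    (Nat.modEq_zero_iff_dvd).mp (Nat.chineseRemainder hcop _ 0).2.2
  have hdvd_z : ∀ t (m : ℕ), m ∣ n → m.factorization p ≤ u → m ∣ z t := by
    intro t m hmn hmu
    have hm0 : m ≠ 0 := fun h => hn.ne' (Nat.eq_zero_of_zero_dvd (h ▸ hmn))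
    have h1 : p ^ m.factorization p ∣ z t := by
      have hdm : p ^ m.factorization p ∣ t * p ^ u :=
        Dvd.dvd.mul_left (pow_dvd_pow p hmu) t
      have hdp : p ^ m.factorization p ∣ p ^ e := pow_dvd_pow p (hmu.trans (by omega))
      have hmod : z t % p ^ e = (t * p ^ u) % p ^ e := hz1 t
      have h2 : p ^ m.factorization p ∣ z t % p ^ e := by
        rw [hmod]; exact (Nat.dvd_mod_iff hdp).mpr hdm
      calc p ^ m.factorization p ∣ p ^ e * (z t / p ^ e) + z t % p ^ e :=
            dvd_add (hdp.mul_right _) h2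
        _ = z t := Nat.div_add_mod _ _
    have h2 : (m / p ^ m.factorization p) ∣ z t :=
      (Nat.ordCompl_dvd_ordCompl_of_dvd hmn p).trans (hz2 t)
    have hcop2 : (p ^ m.factorization p).Coprime (m / p ^ m.factorization p) :=
      Nat.Coprime.pow_left _ (Nat.coprime_ordCompl hp hm0)
    have := hcop2.mul_dvd_of_dvd_of_dvd h1 h2
    rwa [Nat.ordProj_mul_ordCompl_eq_self] at this
  have hzq : ∀ t, z t ≡ t * p ^ u [MOD q'] := fun t => (hz1 t).of_dvd (pow_dvd_pow p hue)
  -- residues and the class groups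
  set ρ : ℕ → ℕ := fun t => a cs + t * p ^ u with hρ
  set C : ℕ → Finset ι := fun t => univ.filter (fun i => q' ∣ gp i ∧ a i ≡ ρ t [MOD q']) with hC
  have hcsC0 : cs ∈ C 0 := by
    simp only [hC, mem_filter, mem_univ, true_and]
    exact ⟨hcs, by simp [hρ, Nat.ModEq.refl]⟩
  -- congruence helpers
  have heq : ∀ (m r r' : ℕ), r ≡ r' [MOD m] → ∀ y : ℕ, (y ≡ r [MOD m] ↔ y ≡ r' [MOD m]) :=
    fun m r r' h y => ⟨fun hy => hy.trans h, fun hy => hy.trans h.symm⟩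
  have hshift_triv : ∀ (m w r : ℕ), m ∣ w → r + w ≡ r [MOD m] := by
    intro m w r hmw
    have : r ≡ r + w [MOD m] := (Nat.modEq_iff_dvd' (Nat.le_add_right _ _)).mpr (by simpa using hmw)
    exact this.symm
  have hxz : ∀ t (x : ℕ), x + z t ≡ x [MOD D₀] :=
    fun t x => hshift_triv _ _ _ (hdvd_z t D₀ hD₀n (le_refl u))
  have hρz : ∀ t, ρ 0 + z t ≡ ρ t [MOD q'] := by
    intro t
    have : ρ 0 + z t = a cs + z t := by simp [hρ]
    rw [this]
    exact (hzq t).add_left (a cs)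
  have haz : ∀ t (i : ι), ¬ q' ∣ gp i → a i + z t ≡ a i [MOD gp i] := by
    intro t i hnd
    apply hshift_triv
    apply hdvd_z t _ (hgn i)
    by_contra hlt
    exact hnd ((hp.pow_dvd_iff_le_factorization (hg0 i)).mpr (by omega))
  -- classifier
  have hcl : ∀ y : ℕ, y ≡ a ((hcov y).choose) [MOD gp ((hcov y).choose)] :=
    fun y => (hcov y).choose_spec.1
  have hclu : ∀ (y : ℕ) (i : ι), y ≡ a i [MOD gp i] → i = (hcov y).choose :=
    fun y i h => (hcov y).choose_spec.2 i h
  -- fiberwise decomposition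
  set W : ι → ℕ → ℕ → Finset ℕ := fun i t x =>
    (range n).filter (fun y => y ≡ x [MOD D₀] ∧ y ≡ ρ t [MOD q'] ∧ y ≡ a i [MOD gp i]) with hW
  set Y3 : ℕ → ℕ → Finset ℕ := fun t x =>
    (range n).filter (fun y => y ≡ x [MOD D₀] ∧ y ≡ ρ t [MOD q'] ∧ y ≡ 0 [MOD 1]) with hY3
  have fib : ∀ t x, (Y3 t x).card = ∑ i : ι, (W i t x).card := by
    intro t x
    rw [Finset.card_eq_sum_card_fiberwise
      (f := fun y => (hcov y).choose) (t := univ) (fun y _ => mem_univ _)]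
    refine Finset.sum_congr rfl fun i _ => ?_
    congr 1
    ext y
    simp only [hY3, hW, Finset.mem_filter, mem_range]
    constructor
    · rintro ⟨⟨h0, h1, h2, _⟩, h4⟩
      refine ⟨h0, h1, h2, ?_⟩
      rw [← h4]; exact hcl y
    · rintro ⟨h0, h1, h2, h3⟩
      exact ⟨⟨h0, h1, h2, Nat.modEq_one⟩, (hclu y i h3).symm⟩
  -- evaluation of the q'-divisible fibers
  have hi_eval : ∀ (t x : ℕ) (i : ι), q' ∣ gp i →
      (W i t x).card = if a i ≡ ρ t [MOD q'] then (cset n a gp D₀ i x).card else 0 := by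
    intro t x i hqi
    by_cases hit : a i ≡ ρ t [MOD q']
    · rw [if_pos hit]
      congr 1
      ext y
      simp only [hW, cset, Finset.mem_filter, mem_range]
      constructor
      · rintro ⟨h0, h1, _, h3⟩; exact ⟨h0, h1, h3⟩
      · rintro ⟨h0, h1, h3⟩
        exact ⟨h0, h1, (h3.of_dvd hqi).trans hit, h3⟩
    · rw [if_neg hit, Finset.card_eq_zero]
      ext y
      simp only [hW, Finset.mem_filter, mem_range, Finset.notMem_empty, iff_false, not_and]
      intro _ _ h2 h3
      exact hit ((h3.of_dvd hqi).symm.trans h2)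
  -- shift-invariance of Y3 and of the "low" fibers
  have y3_inv : ∀ t x, (Y3 t x).card = (Y3 0 x).card := by
    intro t x
    rw [hY3]
    conv_rhs => rw [shift_count hn hD₀n hq'n (one_dvd n) x (ρ 0) 0 (z t)]
    congr 1
    apply Finset.filter_congr
    intro y _
    rw [heq _ _ _ ((hxz t x).symm) y, heq _ _ _ ((hρz t).symm) y]
    constructor
    · rintro ⟨h1, h2, _⟩; exact ⟨h1, h2, Nat.modEq_one⟩
    · rintro ⟨h1, h2, _⟩; exact ⟨h1, h2, Nat.modEq_one⟩
  have lo_inv : ∀ t x (i : ι), ¬ q' ∣ gp i → (W i t x).card = (W i 0 x).card := by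
    intro t x i hnd
    rw [hW]
    conv_rhs => rw [shift_count hn hD₀n hq'n (hgn i) x (ρ 0) (a i) (z t)]
    congr 1
    apply Finset.filter_congr
    intro y _
    rw [heq _ _ _ ((hxz t x).symm) y, heq _ _ _ ((hρz t).symm) y,
      heq _ _ _ ((haz t i hnd).symm) y]
  -- the key identity
  have key : ∀ t x, (∑ i ∈ C t, (cset n a gp D₀ i x).card)
      = (∑ i ∈ C 0, (cset n a gp D₀ i x).card) := by
    intro t x
    have decomp : ∀ s : ℕ, (Y3 s x).card
        = (∑ i ∈ C s, (cset n a gp D₀ i x).card)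
          + (∑ i ∈ univ.filter (fun i => ¬ q' ∣ gp i), (W i s x).card) := by
      intro s
      rw [fib s x, ← Finset.sum_filter_add_sum_filter_not univ (fun i => q' ∣ gp i)]
      congr 1
      rw [Finset.sum_congr rfl (fun i hi => hi_eval s x i (by simpa using (Finset.mem_filter.mp hi).2)),
        ← Finset.sum_filter, Finset.filter_filter]
    have h1 := decomp t
    have h2 := decomp 0
    have h3 : ∀ i ∈ univ.filter (fun i => ¬ q' ∣ gp i), (W i t x).card = (W i 0 x).card :=
      fun i hi => lo_inv t x i (by simpa using (Finset.mem_filter.mp hi).2)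
    have h4 := Finset.sum_congr rfl h3
    have h5 := y3_inv t x
    omega
  -- Q-version of the key identity
  have keyQ : ∀ t, (∑ i ∈ C t, Ff n a gp D₀ i) = (∑ i ∈ C 0, Ff n a gp D₀ i) := by
    intro t; funext x
    have hk := key t x
    simp only [Finset.sum_apply, Ff]
    rw [← Nat.cast_sum, ← Nat.cast_sum, hk]
  set γ : ℕ → (ℕ → ℚ) := fun t => ∑ i ∈ C t, Ff n a gp D i with hγ
  have hγV : ∀ t, γ t ∈ Vd n a gp D :=
    fun t => Submodule.sum_mem _ (fun i _ => Submodule.subset_span ⟨i, rfl⟩)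
  have hact : ∀ s : ℕ, Av n D₀ (γ s) = ((n / D : ℕ) : ℚ) • (∑ i ∈ C s, Ff n a gp D₀ i) := by
    intro s
    rw [hγ, map_sum,
      Finset.sum_congr rfl (fun i (_ : i ∈ C s) => Av_Ff (dvd_mul_left D₀ p) hD hD0 a gp i),
      ← Finset.smul_sum]
  have hAvγ : ∀ t, Av n D₀ (γ t - γ 0) = 0 := by
    intro t
    rw [map_sub, hact t, hact 0, keyQ t, sub_self]
  -- witnesses in each class group
  have selfmem : ∀ (Dl : ℕ), Dl ∣ n → ∀ i : ι, a i % n ∈ cset n a gp Dl i (a i) := by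
    intro Dl hDl i
    simp only [cset, mem_filter, mem_range]
    exact ⟨Nat.mod_lt _ hn, (Nat.mod_modEq _ n).of_dvd hDl, (Nat.mod_modEq _ n).of_dvd (hgn i)⟩
  have cset_pos : ∀ (Dl : ℕ), Dl ∣ n → ∀ i, 0 < (cset n a gp Dl i (a i)).card :=
    fun Dl hDl i => Finset.card_pos.mpr ⟨_, selfmem Dl hDl i⟩
  have hCne : ∀ t, ∃ i, i ∈ C t := by
    intro t
    by_contra hemp
    push_neg at hemp
    have hCt : C t = ∅ := Finset.eq_empty_of_forall_notMem hemp
    have h0 := key t (a cs)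
    rw [hCt, Finset.sum_empty] at h0
    have hpos : 0 < ∑ i ∈ C 0, (cset n a gp D₀ i (a cs)).card := by
      apply Finset.sum_pos' (fun i _ => Nat.zero_le _)
      exact ⟨cs, hcsC0, cset_pos D₀ hD₀n cs⟩
    omega
  set wit : ℕ → ι := fun t => (hCne t).choose with hwitdef
  have hwit : ∀ t, wit t ∈ C t := fun t => (hCne t).choose_spec
  -- distinctness of the residues
  have rho_inj : ∀ t t', t < p → t' < p → ρ t ≡ ρ t' [MOD q'] → t = t' := by
    intro t t' ht ht' hmod
    have h1 : t * p ^ u ≡ t' * p ^ u [MOD q'] := Nat.ModEq.add_left_cancel' (a cs) hmod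
    have cancel : ∀ s s' : ℕ, s ≤ s' → s' < p → s * p ^ u ≡ s' * p ^ u [MOD q'] → s = s' := by
      intro s s' hss hlt hmm
      have hd : q' ∣ s' * p ^ u - s * p ^ u :=
        (Nat.modEq_iff_dvd' (Nat.mul_le_mul_right _ hss)).mp hmm
      rw [← Nat.sub_mul, hq', pow_succ, mul_comm (s' - s) (p ^ u), mul_comm (p ^ u) p] at hd
      rw [mul_comm p (p ^ u)] at hd
      have hpd : p ∣ s' - s := (Nat.mul_dvd_mul_iff_left (pow_pos hp.pos u)).mp hd
      have := Nat.eq_zero_of_dvd_of_lt hpd (by omega)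
      omega
    rcases le_total t t' with h | h
    · exact cancel t t' h ht' h1
    · exact (cancel t' t h ht h1.symm).symm
  -- evaluations
  have eval_pos : ∀ t, (0:ℚ) < γ t (a (wit t)) := by
    intro t
    simp only [hγ, Finset.sum_apply]
    apply Finset.sum_pos' (fun i _ => by simp [Ff])
    refine ⟨wit t, hwit t, ?_⟩
    show (0:ℚ) < Ff n a gp D (wit t) (a (wit t))
    have := cset_pos D hD (wit t)
    simp only [Ff]
    exact_mod_cast this
  have eval_zero : ∀ t t', t < p → t' < p → t ≠ t' → γ t' (a (wit t)) = 0 := by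
    intro t t' ht ht' hne
    simp only [hγ, Finset.sum_apply]
    apply Finset.sum_eq_zero
    intro i hi
    show Ff n a gp D i (a (wit t)) = 0
    simp only [Ff, Nat.cast_eq_zero, Finset.card_eq_zero]
    ext y
    simp only [cset, mem_filter, mem_range, Finset.notMem_empty, iff_false]
    rintro ⟨hy, h1, h2⟩
    have hii : q' ∣ gp i ∧ a i ≡ ρ t' [MOD q'] := by
      have := hi; rw [hC] at this; simpa using this
    have hww : q' ∣ gp (wit t) ∧ a (wit t) ≡ ρ t [MOD q'] := by
      have := hwit t; rw [hC] at this; simpa using this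
    have e1 : y ≡ ρ t [MOD q'] := (h1.of_dvd hq'D).trans hww.2
    have e2 : y ≡ ρ t' [MOD q'] := (h2.of_dvd hii.1).trans hii.2
    exact hne (rho_inj t t' ht ht' (e1.symm.trans e2))
  -- the linear algebra
  haveI : FiniteDimensional ℚ (Vd n a gp D) :=
    FiniteDimensional.span_of_finite ℚ (Set.finite_range _)
  set f : (Vd n a gp D) →ₗ[ℚ] (ℕ → ℚ) := (Av n D₀).comp (Vd n a gp D).subtype with hf
  have hrange : LinearMap.range f = Vd n a gp D₀ := by
    rw [hf, LinearMap.range_comp, Submodule.range_subtype]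
    exact map_Vd hn (dvd_mul_left D₀ p) hD hD0 a gp
  have hp2 : 2 ≤ p := hp.two_le
  have hkerge : p - 1 ≤ Module.finrank ℚ (LinearMap.ker f) := by
    set δ : Fin (p - 1) → (ℕ → ℚ) := fun j => γ (j.1 + 1) - γ 0 with hδ
    have hδV : ∀ j, δ j ∈ Vd n a gp D := fun j => Submodule.sub_mem _ (hγV _) (hγV _)
    have hδker : ∀ j, Av n D₀ (δ j) = 0 := fun j => hAvγ _
    have hind : LinearIndependent ℚ δ := by
      rw [Fintype.linearIndependent_iff]
      intro cvec hsum j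
      have hj : (j.1 + 1) < p := by omega
      have hev := congrFun hsum (a (wit (j.1 + 1)))
      simp only [Finset.sum_apply, Pi.smul_apply, Pi.sub_apply, Pi.zero_apply, smul_eq_mul,
        hδ] at hev
      have hterms : ∀ j' : Fin (p-1),
          cvec j' * (γ (j'.1+1) (a (wit (j.1+1))) - γ 0 (a (wit (j.1+1))))
          = if j' = j then cvec j * γ (j.1+1) (a (wit (j.1+1))) else 0 := by
        intro j'
        by_cases hjj : j' = j
        · subst hjj
          rw [if_pos rfl, eval_zero (j'.1+1) 0 hj hp.pos (by omega), sub_zero]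
        · rw [if_neg hjj]
          have h1 : γ (j'.1+1) (a (wit (j.1+1))) = 0 :=
            eval_zero (j.1+1) (j'.1+1) hj (by omega)
              (by intro hcon; exact hjj (Fin.ext (by omega)))
          have h2 : γ 0 (a (wit (j.1+1))) = 0 := eval_zero (j.1+1) 0 hj hp.pos (by omega)
          rw [h1, h2, sub_zero, mul_zero]
      rw [Finset.sum_congr rfl (fun j' _ => hterms j'), Finset.sum_ite_eq'] at hev
      rw [if_pos (mem_univ j)] at hev
      rcases mul_eq_zero.mp hev with h | h
      · exact h
      · exact absurd h (eval_pos (j.1+1)).ne'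
    have hSle : Submodule.span ℚ (Set.range δ) ≤ Vd n a gp D ⊓ LinearMap.ker (Av n D₀) := by
      rw [Submodule.span_le]
      rintro _ ⟨j, rfl⟩
      exact Submodule.mem_inf.mpr ⟨hδV j, hδker j⟩
    have hfr1 : p - 1 ≤ Module.finrank ℚ (Submodule.span ℚ (Set.range δ)) := by
      rw [finrank_span_eq_card hind]
      simp
    haveI : FiniteDimensional ℚ ((Vd n a gp D) ⊓ LinearMap.ker (Av n D₀) : Submodule ℚ (ℕ → ℚ)) :=
      Submodule.finiteDimensional_of_le inf_le_left
    have hker_fr : Module.finrank ℚ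
        ((Vd n a gp D) ⊓ LinearMap.ker (Av n D₀) : Submodule ℚ (ℕ → ℚ))
        ≤ Module.finrank ℚ (LinearMap.ker f) := by
      rw [hf, LinearMap.ker_comp, ← Submodule.finrank_map_subtype_eq, Submodule.map_comap_subtype]
    calc p - 1 ≤ Module.finrank ℚ (Submodule.span ℚ (Set.range δ)) := hfr1
      _ ≤ Module.finrank ℚ ((Vd n a gp D) ⊓ LinearMap.ker (Av n D₀) : Submodule ℚ (ℕ → ℚ)) :=
          Submodule.finrank_mono hSle
      _ ≤ _ := hker_fr
  have hrn := LinearMap.finrank_range_add_finrank_ker f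
  rw [hrange] at hrn
  omega

lemma main_bound {n : ℕ} (a gp : ι → ℕ) (hn : 0 < n) (hgn : ∀ i, gp i ∣ n)
    (hcov : ∀ y : ℕ, ∃! i, y ≡ a i [MOD gp i])
    (htop : ∀ q k, Nat.Prime q → q ^ k ∣ n → ∃ i, q ^ k ∣ gp i) :
    ∀ D, D ∣ n → 2 * D ≤ 2 ^ Module.finrank ℚ (Vd n a gp D) := by
  intro D
  induction D using Nat.strong_induction_on with
  | _ D ih =>
    intro hDn
    have hDpos : 0 < D := Nat.pos_of_dvd_of_pos hDn hn
    rcases eq_or_ne D 1 with rfl | hne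
    · obtain ⟨i0, _⟩ := (hcov 0).exists
      have hmm : a i0 % n ∈ cset n a gp 1 i0 (a i0) := by
        simp only [cset, mem_filter, mem_range]
        exact ⟨Nat.mod_lt _ hn, Nat.modEq_one, (Nat.mod_modEq _ n).of_dvd (hgn i0)⟩
      have hne0 : Ff n a gp 1 i0 ≠ 0 := by
        intro h
        have h1 : Ff n a gp 1 i0 (a i0) = 0 := by rw [h]; rfl
        have hpos := Finset.card_pos.mpr ⟨_, hmm⟩
        simp only [Ff, Nat.cast_eq_zero] at h1
        omega
      have hbot : Vd n a gp 1 ≠ ⊥ := by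
        intro h
        apply hne0
        have hmem : Ff n a gp 1 i0 ∈ Vd n a gp 1 := Submodule.subset_span ⟨i0, rfl⟩
        rw [h, Submodule.mem_bot] at hmem
        exact hmem
      haveI : FiniteDimensional ℚ (Vd n a gp 1) :=
        FiniteDimensional.span_of_finite ℚ (Set.finite_range _)
      have hfr : Module.finrank ℚ (Vd n a gp 1) ≠ 0 := by
        intro h
        exact hbot (Submodule.finrank_eq_zero.mp h)
      calc 2 * 1 = 2 ^ 1 := by norm_num
        _ ≤ 2 ^ Module.finrank ℚ (Vd n a gp 1) := Nat.pow_le_pow_right (by norm_num) (by omega)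
    · have hpp : D.minFac.Prime := Nat.minFac_prime hne
      obtain ⟨D₀, hD₀⟩ := D.minFac_dvd
      have hD₀n : (D.minFac * D₀) ∣ n := hD₀ ▸ hDn
      have hD₀pos : 0 < D₀ := by
        rcases Nat.eq_zero_or_pos D₀ with h | h
        · rw [h, mul_zero] at hD₀; omega
        · exact h
      have hD₀lt : D₀ < D := by
        rw [hD₀]
        have := hpp.two_le
        nlinarith
      have hstep := step a gp hn hgn hcov htop hpp hD₀n
      have hih := ih D₀ hD₀lt ((dvd_mul_left D₀ D.minFac).trans hD₀n)
      have hple : D.minFac ≤ 2 ^ (D.minFac - 1) := by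
        have h2 := hpp.two_le
        have := Nat.lt_two_pow_self (n := D.minFac - 1)
        omega
      calc 2 * D = D.minFac * (2 * D₀) := by
            conv_lhs => rw [hD₀]
            ring
        _ ≤ 2 ^ (D.minFac - 1) * 2 ^ Module.finrank ℚ (Vd n a gp D₀) := Nat.mul_le_mul hple hih
        _ = 2 ^ (Module.finrank ℚ (Vd n a gp D₀) + (D.minFac - 1)) := by rw [← pow_add, add_comm]
        _ ≤ 2 ^ Module.finrank ℚ (Vd n a gp (D.minFac * D₀)) :=
            Nat.pow_le_pow_right (by norm_num) hstep
        _ = 2 ^ Module.finrank ℚ (Vd n a gp D) := by rw [← hD₀]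

theorem core {n : ℕ} (a gp : ι → ℕ) (hn : 0 < n) (hgn : ∀ i, gp i ∣ n)
    (hcov : ∀ y : ℕ, ∃! i, y ≡ a i [MOD gp i])
    (htop : ∀ q k, Nat.Prime q → q ^ k ∣ n → ∃ i, q ^ k ∣ gp i) :
    n ≤ 2 ^ (Fintype.card ι - 1) := by
  classical
  have h1 := main_bound a gp hn hgn hcov htop n dvd_rfl
  have h2 : Module.finrank ℚ (Vd n a gp n) ≤ Fintype.card ι := by
    have hle := finrank_span_le_card (R := ℚ) (Set.range (Ff n a gp n))
    refine hle.trans ?_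
    rw [Set.toFinset_range]
    exact le_trans (Finset.card_image_le) (by simp)
  have hcard : 1 ≤ Fintype.card ι := by
    obtain ⟨i0, _⟩ := (hcov 0).exists
    exact Fintype.card_pos_iff.mpr ⟨i0⟩
  have h3 : 2 * n ≤ 2 ^ Fintype.card ι :=
    h1.trans (Nat.pow_le_pow_right (by norm_num) h2)
  have h4 : (2:ℕ) ^ Fintype.card ι = 2 * 2 ^ (Fintype.card ι - 1) := by
    rw [← pow_succ']
    congr 1
    omega
  omega

lemma two_lcm {a b p k : ℕ} (hp : p.Prime) (ha : a ≠ 0) (hb : b ≠ 0)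
    (h : p ^ k ∣ Nat.lcm a b) : p ^ k ∣ a ∨ p ^ k ∣ b := by
  have hl : Nat.lcm a b ≠ 0 := Nat.lcm_ne_zero ha hb
  have hk := (hp.pow_dvd_iff_le_factorization hl).mp h
  rw [Nat.factorization_lcm ha hb] at hk
  simp only [Finsupp.sup_apply, le_sup_iff] at hk
  rcases hk with h' | h'
  · exact Or.inl ((hp.pow_dvd_iff_le_factorization ha).mpr h')
  · exact Or.inr ((hp.pow_dvd_iff_le_factorization hb).mpr h')

lemma pow_dvd_finset_lcm {ι : Type*} [DecidableEq ι] (s : Finset ι) (f : ι → ℕ)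
    (hf : ∀ i ∈ s, f i ≠ 0) {p k : ℕ} (hp : p.Prime) (hne : s.Nonempty)
    (hd : p ^ k ∣ s.lcm f) : ∃ i ∈ s, p ^ k ∣ f i := by
  induction s using Finset.induction_on with
  | empty => exact absurd hne (by simp)
  | @insert b s hbs ih =>
    rw [Finset.lcm_insert, lcm_eq_nat_lcm] at hd
    have hfb : f b ≠ 0 := hf b (Finset.mem_insert_self b s)
    have hsl : s.lcm f ≠ 0 := by
      intro h0
      rw [Finset.lcm_eq_zero_iff] at h0
      obtain ⟨i, hi, h0⟩ := h0
      exact hf i (Finset.mem_insert_of_mem hi) h0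
    rcases two_lcm hp hfb hsl hd with h | h
    · exact ⟨b, Finset.mem_insert_self b s, h⟩
    · rcases Finset.eq_empty_or_nonempty s with rfl | hs
      · simp only [Finset.lcm_empty] at h
        have : p ^ k = 1 := Nat.dvd_one.mp h
        exact ⟨b, Finset.mem_insert_self b _, this ▸ one_dvd _⟩
      · obtain ⟨i, hi, hik⟩ := ih (fun i hi => hf i (Finset.mem_insert_of_mem hi)) hs h
        exact ⟨i, Finset.mem_insert_of_mem hi, hik⟩

end CGap

/-- Every constant gap sequence over an alphabet of `d`
letters has minimal period at most `2^(d−1)`. -/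
theorem minPeriod_constantGap_le
    {A : Type*} [Fintype A] (d : ℕ) (hd : Fintype.card A = d)
    (y : ℕ → A) (hy : IsConstantGap y) :
    minPeriod y ≤ 2 ^ (d - 1) := by
  classical
  have hy' : ∀ c : A, (∃ n, y n = c) → ∃ g, 0 < g ∧ ∀ n, y n = c →
      y (n + g) = c ∧ ∀ t, 0 < t → t < g → y (n + t) ≠ c := hy
  choose! G hGpos hGstep using hy'
  set OCC : Finset A := Finset.univ.filter (fun c => ∃ n, y n = c) with hOCC
  have occ_ex : ∀ i : {c // c ∈ OCC}, ∃ x, y x = i.1 :=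
    fun i => (Finset.mem_filter.mp i.2).2
  set a' : {c // c ∈ OCC} → ℕ := fun i => Nat.find (occ_ex i) with ha'
  set g' : {c // c ∈ OCC} → ℕ := fun i => G i.1 with hg'
  have hg'pos : ∀ i, 0 < g' i := fun i => hGpos i.1 (occ_ex i)
  have hfirst : ∀ i, y (a' i) = i.1 := fun i => Nat.find_spec (occ_ex i)
  have upward : ∀ (i : {c // c ∈ OCC}) (k : ℕ), y (a' i + g' i * k) = i.1 := by
    intro i k
    induction k with
    | zero => simpa using hfirst i
    | succ k ih =>
      have hstep := (hGstep i.1 (occ_ex i) _ ih).1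
      have harr : a' i + g' i * (k+1) = (a' i + g' i * k) + G i.1 := by rw [hg']; ring
      rw [harr]
      exact hstep
  have hchar : ∀ (i : {c // c ∈ OCC}) (x : ℕ), y x = i.1 ↔ (a' i ≤ x ∧ g' i ∣ x - a' i) := by
    intro i x
    constructor
    · intro hx
      have hle : a' i ≤ x := Nat.find_min' (occ_ex i) hx
      refine ⟨hle, ?_⟩
      obtain ⟨k, m, hm, hxam⟩ : ∃ k m, m < g' i ∧ x - a' i = g' i * k + m :=
        ⟨(x - a' i)/g' i, (x - a' i)%g' i, Nat.mod_lt _ (hg'pos i), (Nat.div_add_mod _ _).symm⟩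
      have hyq : y (a' i + g' i * k) = i.1 := upward i k
      set gk := g' i * k with hgkdef
      by_cases hqx : a' i + gk = x
      · exact ⟨k, by omega⟩
      · exfalso
        have ht1 : 0 < x - (a' i + gk) := by omega
        have ht2 : x - (a' i + gk) < g' i := by omega
        have hne := (hGstep i.1 (occ_ex i) _ hyq).2 _ ht1 ht2
        apply hne
        have harr : (a' i + gk) + (x - (a' i + gk)) = x := by omega
        rw [harr]
        exact hx
    · rintro ⟨hle, k, hk⟩
      have hxx : x = a' i + g' i * k := by rw [← hk, Nat.add_sub_cancel' hle]
      rw [hxx]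
      exact upward i k
  set N := (Finset.univ : Finset {c // c ∈ OCC}).lcm g' with hN
  have hg'N : ∀ i, g' i ∣ N := fun i => Finset.dvd_lcm (Finset.mem_univ i)
  have hN0 : 0 < N := by
    rcases Nat.eq_zero_or_pos N with h | h
    · exfalso
      rw [hN, Finset.lcm_eq_zero_iff] at h
      obtain ⟨i, _, hi⟩ := h
      exact (hg'pos i).ne' hi
    · exact h
  have hmem0 : y 0 ∈ OCC := by
    rw [hOCC, Finset.mem_filter]
    exact ⟨Finset.mem_univ _, ⟨0, rfl⟩⟩
  haveI : Nonempty {c // c ∈ OCC} := ⟨⟨y 0, hmem0⟩⟩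
  have htop : ∀ q k, Nat.Prime q → q ^ k ∣ N → ∃ i, q ^ k ∣ g' i := by
    intro q k hq hdv
    obtain ⟨i, _, hik⟩ := CGap.pow_dvd_finset_lcm Finset.univ g'
      (fun i _ => (hg'pos i).ne') hq Finset.univ_nonempty hdv
    exact ⟨i, hik⟩
  have hcov : ∀ z : ℕ, ∃! i, z ≡ a' i [MOD g' i] := by
    intro z
    set M := (Finset.univ : Finset {c // c ∈ OCC}).sup a' with hM
    set W := N * (M + 1) with hW
    set X := z + W with hX
    have hzX0 : z ≤ X := Nat.le_add_right _ _
    have hW1 : M + 1 ≤ W := by rw [hW]; exact Nat.le_mul_of_pos_left _ hN0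
    have hXle : ∀ j, a' j ≤ X := by
      intro j
      have h1 : a' j ≤ M := Finset.le_sup (Finset.mem_univ j)
      omega
    have hmemX : y X ∈ OCC := by
      rw [hOCC, Finset.mem_filter]
      exact ⟨Finset.mem_univ _, ⟨X, rfl⟩⟩
    have hyX : y X = (⟨y X, hmemX⟩ : {c // c ∈ OCC}).1 := rfl
    rw [hchar _ X] at hyX
    have hXa : X ≡ a' ⟨y X, hmemX⟩ [MOD g' ⟨y X, hmemX⟩] :=
      ((Nat.modEq_iff_dvd' hyX.1).mpr hyX.2).symm
    have hdW : ∀ j, g' j ∣ W := fun j => (hg'N j).mul_right _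
    have hzXmod : ∀ j, z ≡ X [MOD g' j] := by
      intro j
      apply (Nat.modEq_iff_dvd' hzX0).mpr
      have harr : X - z = W := by omega
      rw [harr]
      exact hdW j
    refine ⟨⟨y X, hmemX⟩, (hzXmod _).trans hXa, ?_⟩
    intro j hj
    have hXj : X ≡ a' j [MOD g' j] := (hzXmod j).symm.trans hj
    have hyXj : y X = j.1 := (hchar j X).mpr
      ⟨hXle j, (Nat.modEq_iff_dvd' (hXle j)).mp hXj.symm⟩
    exact Subtype.ext hyXj.symm
  have hper : ∀ x, y (x + N) = y x := by
    intro x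
    have hmemx : y x ∈ OCC := by
      rw [hOCC, Finset.mem_filter]
      exact ⟨Finset.mem_univ _, ⟨x, rfl⟩⟩
    have hx : y x = (⟨y x, hmemx⟩ : {c // c ∈ OCC}).1 := rfl
    rw [hchar _ x] at hx
    have : y (x + N) = (⟨y x, hmemx⟩ : {c // c ∈ OCC}).1 := by
      apply (hchar _ (x + N)).mpr
      refine ⟨by omega, ?_⟩
      have harr : x + N - a' ⟨y x, hmemx⟩ = (x - a' ⟨y x, hmemx⟩) + N := by omega
      rw [harr]
      exact dvd_add hx.2 (hg'N _)
    exact this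
  have hNle := CGap.core a' g' hN0 hg'N hcov htop
  have hmin : minPeriod y ≤ N := Nat.sInf_le ⟨hN0, hper⟩
  have hcard : Fintype.card {c // c ∈ OCC} ≤ d := by
    rw [← hd, Fintype.card_coe]
    exact Finset.card_le_univ OCC
  calc minPeriod y ≤ N := hmin
    _ ≤ 2 ^ (Fintype.card {c // c ∈ OCC} - 1) := hNle
    _ ≤ 2 ^ (d - 1) := Nat.pow_le_pow_right (by norm_num) (by omega)

end Paper
end

section
/- Let P, P′ be positive integers, H = gcd(P, P′), P = HY, P′ = HY′. Let A ∈ ℤ^{2×2} be unimodular and ℓ, k ∈ ℤ. Then A·(ℓ, k)ᵀ ≡ (0, 0)ᵀ (first entry mod P, second entry mod P′) if and only if there exist λ, κ ∈ ℤ such that (ℓ, k)ᵀ = H·(λ, κ)ᵀ and A·(λ, κ)ᵀ ≡ (0, 0)ᵀ (first entry mod Y, second entry mod Y′). -/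
open Filter Topology Matrix
open scoped ENNReal

namespace Paper

/-- Let `P, P'` be positive integers, `H = gcd(P, P')`,
`P = H·Y`, `P' = H·Y'`, and `M` a unimodular integer `2×2` matrix. Then
`M·(l, k)ᵀ ≡ (0,0)ᵀ mod (P, P')ᵀ` iff `(l, k)ᵀ = H·(lam, kap)ᵀ` for some
integers `lam, kap` with `M·(lam, kap)ᵀ ≡ (0,0)ᵀ mod (Y, Y')ᵀ`. -/
theorem unimodular_congruence_factor_gcd
    (P P' H Y Y' : ℕ) (hP : 0 < P) (hP' : 0 < P')
    (hH : H = Nat.gcd P P') (hY : P = H * Y) (hY' : P' = H * Y')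
    (M : Matrix (Fin 2) (Fin 2) ℤ) (hM : M.det = 1 ∨ M.det = -1)
    (l k : ℤ) :
    ((P : ℤ) ∣ (M 0 0 * l + M 0 1 * k) ∧ (P' : ℤ) ∣ (M 1 0 * l + M 1 1 * k)) ↔
    (∃ lam kap : ℤ, l = (H : ℤ) * lam ∧ k = (H : ℤ) * kap ∧
      (Y : ℤ) ∣ (M 0 0 * lam + M 0 1 * kap) ∧
      (Y' : ℤ) ∣ (M 1 0 * lam + M 1 1 * kap)) := by
  have hHpos : 0 < H := by
    subst hH
    exact Nat.gcd_pos_of_pos_left _ hP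
  have hdet : M 0 0 * M 1 1 - M 0 1 * M 1 0 = M.det := by
    simp [Matrix.det_fin_two]
  constructor
  · rintro ⟨h1, h2⟩
    have hHP : (H : ℤ) ∣ (P : ℤ) := ⟨Y, by exact_mod_cast hY⟩
    have hHP' : (H : ℤ) ∣ (P' : ℤ) := ⟨Y', by exact_mod_cast hY'⟩
    have hu : (H : ℤ) ∣ (M 0 0 * l + M 0 1 * k) := hHP.trans h1
    have hv : (H : ℤ) ∣ (M 1 0 * l + M 1 1 * k) := hHP'.trans h2
    have hdl : (H : ℤ) ∣ M.det * l := by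
      have : M.det * l = M 1 1 * (M 0 0 * l + M 0 1 * k)
          - M 0 1 * (M 1 0 * l + M 1 1 * k) := by
        rw [← hdet]; ring
      rw [this]
      exact dvd_sub (hu.mul_left _) (hv.mul_left _)
    have hdk : (H : ℤ) ∣ M.det * k := by
      have : M.det * k = M 0 0 * (M 1 0 * l + M 1 1 * k)
          - M 1 0 * (M 0 0 * l + M 0 1 * k) := by
        rw [← hdet]; ring
      rw [this]
      exact dvd_sub (hv.mul_left _) (hu.mul_left _)
    have hl : (H : ℤ) ∣ l := by
      rcases hM with h | h <;> rw [h] at hdl <;> simpa using hdl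
    have hk : (H : ℤ) ∣ k := by
      rcases hM with h | h <;> rw [h] at hdk <;> simpa using hdk
    obtain ⟨lam, rfl⟩ := hl
    obtain ⟨kap, rfl⟩ := hk
    refine ⟨lam, kap, rfl, rfl, ?_, ?_⟩
    · have : ((H : ℤ) * Y) ∣ (H : ℤ) * (M 0 0 * lam + M 0 1 * kap) := by
        have : ((H : ℤ) * Y) = (P : ℤ) := by exact_mod_cast hY.symm
        rw [this]
        have e : (H : ℤ) * (M 0 0 * lam + M 0 1 * kap)
            = M 0 0 * ((H:ℤ) * lam) + M 0 1 * ((H:ℤ) * kap) := by ring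
        rw [e]; exact h1
      exact (mul_dvd_mul_iff_left (by exact_mod_cast hHpos.ne' : (H:ℤ) ≠ 0)).mp this
    · have : ((H : ℤ) * Y') ∣ (H : ℤ) * (M 1 0 * lam + M 1 1 * kap) := by
        have : ((H : ℤ) * Y') = (P' : ℤ) := by exact_mod_cast hY'.symm
        rw [this]
        have e : (H : ℤ) * (M 1 0 * lam + M 1 1 * kap)
            = M 1 0 * ((H:ℤ) * lam) + M 1 1 * ((H:ℤ) * kap) := by ring
        rw [e]; exact h2
      exact (mul_dvd_mul_iff_left (by exact_mod_cast hHpos.ne' : (H:ℤ) ≠ 0)).mp this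
  · rintro ⟨lam, kap, rfl, rfl, h1, h2⟩
    constructor
    · have : (P : ℤ) = (H : ℤ) * Y := by exact_mod_cast hY
      rw [this]
      have e : M 0 0 * ((H:ℤ) * lam) + M 0 1 * ((H:ℤ) * kap)
          = (H : ℤ) * (M 0 0 * lam + M 0 1 * kap) := by ring
      rw [e]; exact mul_dvd_mul_left _ h1
    · have : (P' : ℤ) = (H : ℤ) * Y' := by exact_mod_cast hY'
      rw [this]
      have e : M 1 0 * ((H:ℤ) * lam) + M 1 1 * ((H:ℤ) * kap)
          = (H : ℤ) * (M 1 0 * lam + M 1 1 * kap) := by ring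
      rw [e]; exact mul_dvd_mul_left _ h2

end Paper
end

section
/- Fix positive integers P, P′ with H = gcd(P, P′), P = HY, P′ = HY′, and call unimodular A, B ∈ ℤ^{2×2} equivalent (A ≡ B) if there exist c ∈ ℤ coprime with Y and c′ ∈ ℤ coprime with Y′ such that diag(c, c′)·A ≡ B with the first row taken mod Y and the second row mod Y′. Let k, ℓ ∈ ℕ and let A, B be unimodular with A ≡ B. Then: (1) A·(ℓ, k)ᵀ ≡ (0, 0)ᵀ (first entry mod P, second entry mod P′) if and only if B·(ℓ, k)ᵀ ≡ (0, 0)ᵀ (first entry mod P, second entry mod P′); (2) AC ≡ BC for any unimodular C ∈ ℤ^{2×2}. -/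
open Filter Topology Matrix
open scoped ENNReal

namespace Paper

private lemma dvd_lk (H : ℕ) (a b d e l k : ℤ)
    (hdet : a * e - b * d = 1 ∨ a * e - b * d = -1)
    (hu : (H : ℤ) ∣ a * l + b * k) (hv : (H : ℤ) ∣ d * l + e * k) :
    (H : ℤ) ∣ l ∧ (H : ℤ) ∣ k := by
  have h1 : (H : ℤ) ∣ (a * e - b * d) * l := by
    have := dvd_sub (hu.mul_left e) (hv.mul_left b)
    convert this using 1; rfl; ring
  have h2 : (H : ℤ) ∣ (a * e - b * d) * k := by
    have := dvd_sub (hv.mul_left a) (hu.mul_left d)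
    convert this using 1; rfl; ring
  rcases hdet with h | h <;> rw [h] at h1 h2
  · simpa using And.intro h1 h2
  · constructor
    · simpa using (dvd_neg).mpr h1
    · simpa using (dvd_neg).mpr h2

private lemma row_iff (H Y : ℕ) (hH : (H : ℤ) ≠ 0) (c a b a' b' l k : ℤ)
    (hc : IsCoprime c (Y : ℤ))
    (ha : (Y : ℤ) ∣ c * a - a') (hb : (Y : ℤ) ∣ c * b - b')
    (hl : (H : ℤ) ∣ l) (hk : (H : ℤ) ∣ k) :
    ((H : ℤ) * Y ∣ a * l + b * k) ↔ ((H : ℤ) * Y ∣ a' * l + b' * k) := by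
  obtain ⟨l0, rfl⟩ := hl
  obtain ⟨k0, rfl⟩ := hk
  rw [show a * ((H:ℤ) * l0) + b * ((H:ℤ) * k0) = (H:ℤ) * (a * l0 + b * k0) by ring,
      show a' * ((H:ℤ) * l0) + b' * ((H:ℤ) * k0) = (H:ℤ) * (a' * l0 + b' * k0) by ring,
      mul_dvd_mul_iff_left hH, mul_dvd_mul_iff_left hH]
  have hcong : (Y : ℤ) ∣ c * (a * l0 + b * k0) - (a' * l0 + b' * k0) := by
    have := dvd_add (ha.mul_right l0) (hb.mul_right k0)
    convert this using 1; rfl; ring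
  constructor
  · intro h
    have := dvd_sub (h.mul_left c) hcong
    simpa using this
  · intro h
    have hcs : (Y : ℤ) ∣ c * (a * l0 + b * k0) := by
      have := dvd_add hcong h
      simpa using this
    exact hc.symm.dvd_of_dvd_mul_left hcs

/-- Fix positive `P, P'` with `H = gcd(P, P')`, `P = H·Y`,
`P' = H·Y'`. For unimodular matrices `M ≡ M'` (in the sense of `MatEquiv`):
(1) `M·(l, k)ᵀ ≡ (0,0)ᵀ mod (P, P')ᵀ` iff `M'·(l, k)ᵀ ≡ (0,0)ᵀ mod (P, P')ᵀ`;
(2) `M·C ≡ M'·C` for any unimodular `C`. -/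
theorem matEquiv_solutions_and_mul_right
    (P P' H Y Y' : ℕ) (hP : 0 < P) (hP' : 0 < P')
    (hH : H = Nat.gcd P P') (hY : P = H * Y) (hY' : P' = H * Y')
    (M M' : Matrix (Fin 2) (Fin 2) ℤ)
    (hM : M.det = 1 ∨ M.det = -1) (hM' : M'.det = 1 ∨ M'.det = -1)
    (hMM' : MatEquiv Y Y' M M') (k l : ℕ) :
    (((P : ℤ) ∣ (M 0 0 * (l : ℤ) + M 0 1 * (k : ℤ)) ∧
       (P' : ℤ) ∣ (M 1 0 * (l : ℤ) + M 1 1 * (k : ℤ))) ↔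
     ((P : ℤ) ∣ (M' 0 0 * (l : ℤ) + M' 0 1 * (k : ℤ)) ∧
       (P' : ℤ) ∣ (M' 1 0 * (l : ℤ) + M' 1 1 * (k : ℤ)))) ∧
    (∀ C : Matrix (Fin 2) (Fin 2) ℤ, (C.det = 1 ∨ C.det = -1) →
      MatEquiv Y Y' (M * C) (M' * C)) := by
  obtain ⟨c, c', hc, hc', h0, h1⟩ := hMM'
  have hHne : (H : ℤ) ≠ 0 := by
    have : 0 < H := hH ▸ Nat.gcd_pos_of_pos_left _ hP
    exact_mod_cast this.ne'
  have hPcast : (P : ℤ) = (H : ℤ) * Y := by exact_mod_cast congrArg (Nat.cast : ℕ → ℤ) hY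
  have hP'cast : (P' : ℤ) = (H : ℤ) * Y' := by exact_mod_cast congrArg (Nat.cast : ℕ → ℤ) hY'
  have hdetM : M 0 0 * M 1 1 - M 0 1 * M 1 0 = 1 ∨ M 0 0 * M 1 1 - M 0 1 * M 1 0 = -1 := by
    rwa [Matrix.det_fin_two] at hM
  have hdetM' : M' 0 0 * M' 1 1 - M' 0 1 * M' 1 0 = 1 ∨
      M' 0 0 * M' 1 1 - M' 0 1 * M' 1 0 = -1 := by
    rwa [Matrix.det_fin_two] at hM'
  have hHP : (H : ℤ) ∣ (P : ℤ) := ⟨Y, hPcast⟩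
  have hHP' : (H : ℤ) ∣ (P' : ℤ) := ⟨Y', hP'cast⟩
  constructor
  · constructor
    · rintro ⟨hu, hv⟩
      obtain ⟨hl, hk⟩ := dvd_lk H (M 0 0) (M 0 1) (M 1 0) (M 1 1) l k hdetM
        (hHP.trans hu) (hHP'.trans hv)
      constructor
      · rw [hPcast] at hu ⊢
        exact (row_iff H Y hHne c (M 0 0) (M 0 1) (M' 0 0) (M' 0 1) l k hc
          (h0 0) (h0 1) hl hk).mp hu
      · rw [hP'cast] at hv ⊢
        exact (row_iff H Y' hHne c' (M 1 0) (M 1 1) (M' 1 0) (M' 1 1) l k hc'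
          (h1 0) (h1 1) hl hk).mp hv
    · rintro ⟨hu, hv⟩
      obtain ⟨hl, hk⟩ := dvd_lk H (M' 0 0) (M' 0 1) (M' 1 0) (M' 1 1) l k hdetM'
        (hHP.trans hu) (hHP'.trans hv)
      constructor
      · rw [hPcast] at hu ⊢
        exact (row_iff H Y hHne c (M 0 0) (M 0 1) (M' 0 0) (M' 0 1) l k hc
          (h0 0) (h0 1) hl hk).mpr hu
      · rw [hP'cast] at hv ⊢
        exact (row_iff H Y' hHne c' (M 1 0) (M 1 1) (M' 1 0) (M' 1 1) l k hc'
          (h1 0) (h1 1) hl hk).mpr hv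
  · intro C _
    refine ⟨c, c', hc, hc', fun j => ?_, fun j => ?_⟩
    · have := dvd_add ((h0 0).mul_right (C 0 j)) ((h0 1).mul_right (C 1 j))
      simp only [Matrix.mul_apply, Fin.sum_univ_two]
      convert this using 1; rfl; ring
    · have := dvd_add ((h1 0).mul_right (C 0 j)) ((h1 1).mul_right (C 1 j))
      simp only [Matrix.mul_apply, Fin.sum_univ_two]
      convert this using 1; rfl; ring

end Paper
end

section
/- Let β > 0, let P, P′ be positive integers with L = lcm(P, P′) > 1, and let A ∈ ℤ^{2×2} be unimodular. Then D(β, A) ⊆ (1, ⌈L(1+β)⌉ − 2); in particular D(β, A) is bounded. -/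
open Filter Topology Matrix
open scoped ENNReal

namespace Paper

/-- Every `δ` beyond the bound is `(1+β)`-forcing. -/
lemma isForcing_of_big
    (β : ℝ) (hβ : 0 < β) (P P' : ℕ) (hP : 0 < P) (hP' : 0 < P')
    (hL : 1 < Nat.lcm P P')
    (M : Matrix (Fin 2) (Fin 2) ℤ) {δ : ℝ}
    (hδ : ((⌈(Nat.lcm P P' : ℝ) * (1 + β)⌉ : ℝ) - 2) < δ) :
    IsForcing β P P' M δ := by
  set L : ℕ := Nat.lcm P P' with hLdef
  have hL2 : 2 ≤ L := hL
  have hLR : (2 : ℝ) ≤ (L : ℝ) := by exact_mod_cast hL2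
  have hβL : 0 < β * (L : ℝ) := by positivity
  set c : ℤ := ⌈β * (L : ℝ)⌉ with hcdef
  have hc1 : 1 ≤ c := Int.ceil_pos.mpr hβL
  have hceil : ⌈(L : ℝ) * (1 + β)⌉ = c + L := by
    have h1 : (L : ℝ) * (1 + β) = β * (L : ℝ) + ((L : ℤ) : ℝ) := by
      push_cast; ring
    rw [h1, Int.ceil_add_intCast]
  rw [hceil] at hδ
  have hδ' : (c : ℝ) + (L : ℝ) - 2 < δ := by push_cast at hδ; linarith
  set m : ℕ := (c - 1).toNat with hmdef
  have hmc : (m : ℤ) = c - 1 := Int.toNat_of_nonneg (by omega)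
  have hmcR : (m : ℝ) = (c : ℝ) - 1 := by exact_mod_cast congrArg (Int.cast : ℤ → ℝ) hmc
  have hδ1 : 1 < δ := by
    have : (1 : ℝ) ≤ (c : ℝ) := by exact_mod_cast hc1
    linarith
  refine ⟨hδ1, m, L, 0, by omega, ?_, ?_, ?_⟩
  · constructor
    · have h : (P : ℤ) ∣ (L : ℤ) := Int.natCast_dvd_natCast.mpr (Nat.dvd_lcm_left P P')
      simpa using h.mul_left (M 0 1)
    · have h : (P' : ℤ) ∣ (L : ℤ) := Int.natCast_dvd_natCast.mpr (Nat.dvd_lcm_right P P')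
      simpa using h.mul_left (M 1 1)
  · constructor
    · rw [hmcR]; linarith
    · rw [hmcR]
      rw [show ((0 : ℕ) : ℝ) * (δ - ((c : ℝ) - 1)) - (L : ℝ) = -(L : ℝ) by push_cast; ring,
        abs_neg, abs_of_nonneg (by positivity)]
      linarith
  · refine ⟨fun h => absurd h (by omega), fun _ => ?_, fun h => absurd h (by omega)⟩
    have hkl : ((L : ℕ) : ℝ) + (m : ℝ) * ((0 : ℕ) : ℝ) = (L : ℝ) := by push_cast; ring
    rw [hkl, le_div_iff₀ (by linarith)]
    have hle : β * (L : ℝ) ≤ (c : ℝ) := Int.le_ceil _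
    rw [hmcR]
    linarith

/-- Let `β > 0`, `P, P'` positive with `L = lcm(P, P') > 1`,
and `M` unimodular. Then `D(β, M) ⊆ (1, ⌈L(1+β)⌉ − 2)`; in particular
`D(β, M)` is bounded. -/
theorem DSet_subset_Ioo_and_bddAbove
    (β : ℝ) (hβ : 0 < β) (P P' : ℕ) (hP : 0 < P) (hP' : 0 < P')
    (hL : 1 < Nat.lcm P P')
    (M : Matrix (Fin 2) (Fin 2) ℤ) (hM : M.det = 1 ∨ M.det = -1) :
    DSet β P P' M ⊆
      Set.Ioo 1 ((⌈(Nat.lcm P P' : ℝ) * (1 + β)⌉ : ℝ) - 2) ∧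
    BddAbove (DSet β P P' M) := by
  set B : ℝ := (⌈(Nat.lcm P P' : ℝ) * (1 + β)⌉ : ℝ) - 2 with hBdef
  have hL2 : 2 ≤ Nat.lcm P P' := hL
  have hLR : (2 : ℝ) ≤ (Nat.lcm P P' : ℝ) := by exact_mod_cast hL2
  have h2lt : (2 : ℝ) < (Nat.lcm P P' : ℝ) * (1 + β) := by nlinarith
  have hB1 : (1 : ℝ) ≤ B := by
    have : ((2 : ℤ) : ℝ) < (Nat.lcm P P' : ℝ) * (1 + β) := by exact_mod_cast h2lt
    have h3 : (2 : ℤ) < ⌈(Nat.lcm P P' : ℝ) * (1 + β)⌉ := Int.lt_ceil.mpr this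
    have : (3 : ℝ) ≤ (⌈(Nat.lcm P P' : ℝ) * (1 + β)⌉ : ℝ) := by exact_mod_cast h3
    simp only [hBdef]; linarith
  have hsub : Set.Ioi B ⊆ ForcingSet β P P' M := fun δ hδ =>
    isForcing_of_big β hβ P P' hP hP' hL M hδ
  have hcl : Set.Ici B ⊆ closure (ForcingSet β P P' M) := by
    rw [← closure_Ioi]
    exact closure_mono hsub
  have hmain : DSet β P P' M ⊆ Set.Ioo 1 B := by
    intro δ hδ
    refine ⟨hδ.1, ?_⟩
    by_contra h
    exact hδ.2 (hcl (le_of_not_gt h))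
  exact ⟨hmain, ⟨B, fun δ hδ => (hmain hδ).2.le⟩⟩

end Paper
end
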